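/- arXiv:2604.01468 — 6 statements merged into one kernel-verified Lean document; each statement's English description precedes it below -/
import Mathlib

section
/- The extreme points of the polytope Q of ε-neighbor indistinguishable probability vectors in ℝ^n are exactly the ε-scales. That is, a vector t ∈ Q is an extreme point of Q if and only if for every i ∈ {0,...,n-2}, either t_i = e^ε t_{i+1} or t_i = e^{-ε} t_{i+1}. -/
def NeighborIndist (ε : ℝ) (n : ℕ) (v : Fin (n+1) → ℝ) : Prop :=
  ∀ i : Fin n, Real.exp (-ε) * v i.succ ≤ v i.castSucc ∧ v i.castSucc ≤ Real.exp ε * v i.succ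

private lemma fin_castSucc_mk (n k : ℕ) (hk : k < n) :
    (Fin.castSucc ⟨k, hk⟩ : Fin (n+1)) = ⟨k, by omega⟩ := rfl

private lemma fin_succ_mk (n k : ℕ) (hk : k < n) :
    (Fin.succ ⟨k, hk⟩ : Fin (n+1)) = ⟨k+1, by omega⟩ := rfl

private lemma fin_mk_eq (n a b : ℕ) (ha : a < n) (h : a = b) :
    (⟨a, ha⟩ : Fin n) = ⟨b, h ▸ ha⟩ := by subst h; rfl

/-- All coordinates of a member of Q are positive. -/
private lemma pos_of_mem (ε : ℝ) (n : ℕ) (t : Fin (n+1) → ℝ)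
    (h0 : ∀ i, 0 ≤ t i) (hs : ∑ i, t i = 1) (hN : NeighborIndist ε n t) :
    ∀ j, 0 < t j := by
  have hex : ∃ j, 0 < t j := by
    by_contra h
    push_neg at h
    have : ∑ i, t i = 0 := le_antisymm (Finset.sum_nonpos fun i _ => h i)
      (Finset.sum_nonneg fun i _ => h0 i)
    rw [hs] at this; norm_num at this
  obtain ⟨j0, hj0⟩ := hex
  -- propagation steps
  have up : ∀ k (hk : k < n), 0 < t ⟨k, by omega⟩ → 0 < t ⟨k+1, by omega⟩ := by
    intro k hk hpos
    have h2 := (hN ⟨k, hk⟩).2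
    rw [fin_castSucc_mk, fin_succ_mk] at h2
    nlinarith [Real.exp_pos ε]
  have down : ∀ k (hk : k < n), 0 < t ⟨k+1, by omega⟩ → 0 < t ⟨k, by omega⟩ := by
    intro k hk hpos
    have h1 := (hN ⟨k, hk⟩).1
    rw [fin_castSucc_mk, fin_succ_mk] at h1
    nlinarith [Real.exp_pos (-ε)]
  have upm : ∀ m (h : (j0 : ℕ) + m ≤ n), 0 < t ⟨(j0 : ℕ) + m, by omega⟩ := by
    intro m
    induction m with
    | zero => intro h; simpa using hj0
    | succ m ih =>
      intro h
      exact up ((j0 : ℕ) + m) (by omega) (ih (by omega))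
  have downm : ∀ m (h : m ≤ (j0 : ℕ)), 0 < t ⟨(j0 : ℕ) - m, by omega⟩ := by
    intro m
    induction m with
    | zero => intro h; simpa using hj0
    | succ m ih =>
      intro h
      have hd := down ((j0 : ℕ) - m - 1) (by omega) ?_
      · rwa [fin_mk_eq (n+1) ((j0:ℕ) - m - 1) ((j0:ℕ) - (m+1)) (by omega) (by omega)] at hd
      · have := ih (by omega)
        rwa [fin_mk_eq (n+1) ((j0:ℕ) - m) ((j0:ℕ) - m - 1 + 1) (by omega) (by omega)] at this
  intro j
  rcases le_or_gt (j0 : ℕ) (j : ℕ) with h | h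
  · have := upm ((j : ℕ) - (j0 : ℕ)) (by omega)
    rwa [fin_mk_eq (n+1) ((j0:ℕ) + ((j:ℕ) - (j0:ℕ))) (j:ℕ) (by omega) (by omega),
      Fin.eta] at this
  · have := downm ((j0 : ℕ) - (j : ℕ)) (by omega)
    rwa [fin_mk_eq (n+1) ((j0:ℕ) - ((j0:ℕ) - (j:ℕ))) (j:ℕ) (by omega) (by omega),
      Fin.eta] at this

/-- Two vectors satisfying the same first-order linear recurrence are proportional. -/
private lemma rec_prop (n : ℕ) (x t : Fin (n+1) → ℝ) (r : Fin n → ℝ)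
    (hx : ∀ i : Fin n, x i.castSucc = r i * x i.succ)
    (ht : ∀ i : Fin n, t i.castSucc = r i * t i.succ) :
    ∀ j : Fin (n+1), t (Fin.last n) * x j = x (Fin.last n) * t j := by
  have key : ∀ m (h : m ≤ n),
      t (Fin.last n) * x ⟨n - m, by omega⟩ = x (Fin.last n) * t ⟨n - m, by omega⟩ := by
    intro m
    induction m with
    | zero =>
      intro h
      have hl : (⟨n - 0, by omega⟩ : Fin (n+1)) = Fin.last n := by
        apply Fin.ext; simp [Fin.last]
      rw [hl]; ring
    | succ m ih =>
      intro h
      have h1 := hx ⟨n - m - 1, by omega⟩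
      have h2 := ht ⟨n - m - 1, by omega⟩
      rw [fin_castSucc_mk, fin_succ_mk,
        fin_mk_eq (n+1) (n - m - 1) (n - (m+1)) (by omega) (by omega),
        fin_mk_eq (n+1) (n - m - 1 + 1) (n - m) (by omega) (by omega)] at h1 h2
      have := ih (by omega)
      rw [h1, h2, mul_left_comm, this, mul_left_comm]
  intro j
  have := key (n - (j : ℕ)) (by omega)
  rwa [fin_mk_eq (n+1) (n - (n - (j:ℕ))) (j:ℕ) (by omega) (by omega), Fin.eta] at this

set_option maxHeartbeats 2000000 in
/-- The extreme points of the polytope Q of ε-neighbor indistinguishable probability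
vectors are exactly the ε-scales. -/
theorem stmt4 (ε : ℝ) (hε : 0 < ε) (n : ℕ)
    (Q : Set (Fin (n+1) → ℝ))
    (hQ : Q = {t | (∀ i, 0 ≤ t i) ∧ (∑ i, t i = 1) ∧ NeighborIndist ε n t})
    (t : Fin (n+1) → ℝ) (ht : t ∈ Q) :
    t ∈ Q.extremePoints ℝ ↔
      ∀ i : Fin n, t i.castSucc = Real.exp ε * t i.succ ∨
        t i.castSucc = Real.exp (-ε) * t i.succ := by
  subst hQ
  obtain ⟨h0, hs, hN⟩ := ht
  have hpos : ∀ j, 0 < t j := pos_of_mem ε n t h0 hs hN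
  have hexp : (0:ℝ) < Real.exp ε := Real.exp_pos ε
  have hexp' : (0:ℝ) < Real.exp (-ε) := Real.exp_pos (-ε)
  constructor
  · -- extreme → scale
    intro hext
    by_contra hcon
    push_neg at hcon
    obtain ⟨i, hi1, hi2⟩ := hcon
    have hs1 : t i.castSucc < Real.exp ε * t i.succ := lt_of_le_of_ne (hN i).2 hi1
    have hs2 : Real.exp (-ε) * t i.succ < t i.castSucc := lt_of_le_of_ne (hN i).1 (Ne.symm hi2)
    -- build a perturbation
    set S : ℝ := ∑ j ∈ Finset.univ.filter (fun j : Fin (n+1) => (j : ℕ) ≤ (i : ℕ)), t j with hS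
    set T : ℝ := ∑ j ∈ Finset.univ.filter (fun j : Fin (n+1) => ¬ (j : ℕ) ≤ (i : ℕ)), t j with hT
    have hST : S + T = 1 := by
      rw [hS, hT, Finset.sum_filter_add_sum_filter_not, hs]
    have hSpos : 0 < S := by
      apply Finset.sum_pos' (fun j _ => (hpos j).le)
      refine ⟨i.castSucc, Finset.mem_filter.2 ⟨Finset.mem_univ _, ?_⟩, hpos _⟩
      simp [Fin.coe_castSucc]
    have hTpos : 0 < T := by
      apply Finset.sum_pos' (fun j _ => (hpos j).le)
      refine ⟨i.succ, Finset.mem_filter.2 ⟨Finset.mem_univ _, ?_⟩, hpos _⟩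
      simp [Fin.val_succ]
    set m₁ : ℝ := Real.exp ε * t i.succ - t i.castSucc with hm₁
    set m₂ : ℝ := t i.castSucc - Real.exp (-ε) * t i.succ with hm₂
    have hm₁pos : 0 < m₁ := by rw [hm₁]; linarith
    have hm₂pos : 0 < m₂ := by rw [hm₂]; linarith
    set K : ℝ := t i.castSucc + (S / T) * (Real.exp ε * t i.succ) + 1 + S / T with hK
    have hKpos : 1 ≤ K := by
      have h1 : 0 < t i.castSucc := hpos _
      have h2 : 0 < t i.succ := hpos _
      have h3 : 0 < S / T := div_pos hSpos hTpos
      rw [hK]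
      nlinarith [mul_pos h3 (mul_pos hexp h2)]
    set δ : ℝ := min m₁ (min m₂ 1) / K with hδ
    have hδpos : 0 < δ := by
      apply div_pos _ (by linarith)
      exact lt_min hm₁pos (lt_min hm₂pos one_pos)
    set b : ℝ := δ * S / T with hb
    have hbpos : 0 < b := div_pos (mul_pos hδpos hSpos) hTpos
    have hbT : b * T = δ * S := by
      rw [hb]; field_simp
    have hδ1 : δ ≤ 1 := by
      rw [hδ]
      calc min m₁ (min m₂ 1) / K ≤ 1 / K := by
            apply div_le_div_of_nonneg_right _ (by linarith)
            · exact le_trans (min_le_right _ _) (min_le_right _ _)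
          _ ≤ 1 := by
            rw [div_le_one (by linarith)]; exact hKpos
    have hδK : δ * K ≤ min m₁ (min m₂ 1) := by
      rw [hδ, div_mul_eq_mul_div, mul_div_assoc]
      have : K / K = 1 := div_self (by linarith)
      rw [this, mul_one]
    have hKge : S / T ≤ K := by
      have h1 : 0 < t i.castSucc := hpos _
      have h2 : 0 < t i.succ := hpos _
      have h3 : 0 < S / T := div_pos hSpos hTpos
      rw [hK]
      nlinarith [mul_pos h3 (mul_pos hexp h2)]
    have hb1 : b ≤ 1 := by
      have hδK1 : δ * K ≤ 1 := le_trans hδK (le_trans (min_le_right _ _) (min_le_right _ _))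
      have hbe2 : b = δ * (S / T) := by rw [hb]; ring
      rw [hbe2]
      exact le_trans (mul_le_mul_of_nonneg_left hKge hδpos.le) hδK1
    -- key margin inequalities
    have hδK₁ : δ * K ≤ m₁ := le_trans hδK (min_le_left _ _)
    have hδK₂ : δ * K ≤ m₂ := le_trans hδK (le_trans (min_le_right _ _) (min_le_left _ _))
    have hbe : b * (Real.exp ε * t i.succ) = δ * (S / T) * (Real.exp ε * t i.succ) := by
      rw [hb]; ring
    have hmid : t i.castSucc + (S / T) * (Real.exp ε * t i.succ) ≤ K := by
      have h3 : 0 < S / T := div_pos hSpos hTpos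
      rw [hK]; linarith
    have hmargin1 : (1 + δ) * t i.castSucc ≤ (1 - b) * (Real.exp ε * t i.succ) := by
      have h1 : δ * t i.castSucc + b * (Real.exp ε * t i.succ) ≤ m₁ := by
        rw [hbe]
        calc δ * t i.castSucc + δ * (S / T) * (Real.exp ε * t i.succ)
            = δ * (t i.castSucc + (S / T) * (Real.exp ε * t i.succ)) := by ring
          _ ≤ δ * K := mul_le_mul_of_nonneg_left hmid hδpos.le
          _ ≤ m₁ := hδK₁
      rw [hm₁] at h1; nlinarith
    have hmargin2 : Real.exp (-ε) * ((1 + b) * t i.succ) ≤ (1 - δ) * t i.castSucc := by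
      have h1 : δ * t i.castSucc + b * (Real.exp (-ε) * t i.succ) ≤ m₂ := by
        have hle : b * (Real.exp (-ε) * t i.succ) ≤ b * (Real.exp ε * t i.succ) := by
          apply mul_le_mul_of_nonneg_left _ hbpos.le
          have : Real.exp (-ε) ≤ Real.exp ε := Real.exp_le_exp.2 (by linarith)
          nlinarith [hpos i.succ]
        calc δ * t i.castSucc + b * (Real.exp (-ε) * t i.succ)
            ≤ δ * t i.castSucc + δ * (S / T) * (Real.exp ε * t i.succ) := by
              rw [← hbe]; linarith
          _ = δ * (t i.castSucc + (S / T) * (Real.exp ε * t i.succ)) := by ring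
          _ ≤ δ * K := mul_le_mul_of_nonneg_left hmid hδpos.le
          _ ≤ m₂ := hδK₂
      rw [hm₂] at h1; nlinarith
    -- the perturbed vectors
    have hsum : ∀ (c d : ℝ),
        ∑ j : Fin (n+1), (if (j : ℕ) ≤ (i : ℕ) then c else d) * t j = c * S + d * T := by
      intro c d
      rw [hS, hT, ← Finset.sum_filter_add_sum_filter_not Finset.univ
        (fun j : Fin (n+1) => (j : ℕ) ≤ (i : ℕ)) (fun j => (if (j : ℕ) ≤ (i : ℕ) then c else d) * t j)]
      congr 1
      · rw [Finset.sum_congr rfl fun j hj => by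
          rw [if_pos (Finset.mem_filter.1 hj).2], ← Finset.mul_sum]
      · rw [Finset.sum_congr rfl fun j hj => by
          rw [if_neg (Finset.mem_filter.1 hj).2], ← Finset.mul_sum]
    -- neighbor constraints for perturbations
    have hnbr : ∀ (c d : ℝ), 0 ≤ c → 0 ≤ d →
        Real.exp (-ε) * (d * t i.succ) ≤ c * t i.castSucc →
        c * t i.castSucc ≤ Real.exp ε * (d * t i.succ) →
        NeighborIndist ε n (fun j => (if (j : ℕ) ≤ (i : ℕ) then c else d) * t j) := by
      intro c d hc hd hlow hhigh i'
      have hcs : ((i'.castSucc : Fin (n+1)) : ℕ) = (i' : ℕ) := Fin.coe_castSucc i'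
      have hsc : ((i'.succ : Fin (n+1)) : ℕ) = (i' : ℕ) + 1 := Fin.val_succ i'
      rcases lt_trichotomy (i' : ℕ) (i : ℕ) with h | h | h
      · have p1 : ((i'.castSucc : Fin (n+1)) : ℕ) ≤ (i : ℕ) := by omega
        have p2 : ((i'.succ : Fin (n+1)) : ℕ) ≤ (i : ℕ) := by omega
        simp only [if_pos p1, if_pos p2]
        constructor
        · calc Real.exp (-ε) * (c * t i'.succ) = c * (Real.exp (-ε) * t i'.succ) := by ring
            _ ≤ c * t i'.castSucc := mul_le_mul_of_nonneg_left (hN i').1 hc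
        · calc c * t i'.castSucc ≤ c * (Real.exp ε * t i'.succ) :=
              mul_le_mul_of_nonneg_left (hN i').2 hc
            _ = Real.exp ε * (c * t i'.succ) := by ring
      · have hieq : i' = i := Fin.ext h
        subst hieq
        have p1 : ((i'.castSucc : Fin (n+1)) : ℕ) ≤ (i' : ℕ) := by omega
        have p2 : ¬ ((i'.succ : Fin (n+1)) : ℕ) ≤ (i' : ℕ) := by omega
        simp only [if_pos p1, if_neg p2]
        exact ⟨hlow, hhigh⟩
      · have p1 : ¬ ((i'.castSucc : Fin (n+1)) : ℕ) ≤ (i : ℕ) := by omega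
        have p2 : ¬ ((i'.succ : Fin (n+1)) : ℕ) ≤ (i : ℕ) := by omega
        simp only [if_neg p1, if_neg p2]
        constructor
        · calc Real.exp (-ε) * (d * t i'.succ) = d * (Real.exp (-ε) * t i'.succ) := by ring
            _ ≤ d * t i'.castSucc := mul_le_mul_of_nonneg_left (hN i').1 hd
        · calc d * t i'.castSucc ≤ d * (Real.exp ε * t i'.succ) :=
              mul_le_mul_of_nonneg_left (hN i').2 hd
            _ = Real.exp ε * (d * t i'.succ) := by ring
    set x : Fin (n+1) → ℝ := fun j => (if (j : ℕ) ≤ (i : ℕ) then 1 + δ else 1 - b) * t j with hx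
    set y : Fin (n+1) → ℝ := fun j => (if (j : ℕ) ≤ (i : ℕ) then 1 - δ else 1 + b) * t j with hy
    have hxQ : x ∈ {t : Fin (n+1) → ℝ | (∀ i, 0 ≤ t i) ∧ (∑ i, t i = 1) ∧ NeighborIndist ε n t} := by
      refine ⟨?_, ?_, ?_⟩
      · intro j
        rw [hx]
        apply mul_nonneg _ (h0 j)
        split <;> linarith
      · rw [hx, hsum]
        nlinarith [hbT, hST]
      · rw [hx]
        apply hnbr (1 + δ) (1 - b) (by linarith) (by linarith)
        · calc Real.exp (-ε) * ((1 - b) * t i.succ)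
              ≤ Real.exp (-ε) * (1 * t i.succ) := by
                apply mul_le_mul_of_nonneg_left _ hexp'.le
                nlinarith [hpos i.succ]
            _ = Real.exp (-ε) * t i.succ := by ring
            _ ≤ t i.castSucc := (hN i).1
            _ ≤ (1 + δ) * t i.castSucc := by nlinarith [hpos i.castSucc]
        · calc (1 + δ) * t i.castSucc ≤ (1 - b) * (Real.exp ε * t i.succ) := hmargin1
            _ = Real.exp ε * ((1 - b) * t i.succ) := by ring
    have hyQ : y ∈ {t : Fin (n+1) → ℝ | (∀ i, 0 ≤ t i) ∧ (∑ i, t i = 1) ∧ NeighborIndist ε n t} := by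
      refine ⟨?_, ?_, ?_⟩
      · intro j
        rw [hy]
        apply mul_nonneg _ (h0 j)
        split <;> linarith
      · rw [hy, hsum]
        nlinarith [hbT, hST]
      · rw [hy]
        apply hnbr (1 - δ) (1 + b) (by linarith) (by linarith)
        · exact hmargin2
        · calc (1 - δ) * t i.castSucc ≤ 1 * t i.castSucc := by
                nlinarith [hpos i.castSucc]
            _ = t i.castSucc := by ring
            _ ≤ Real.exp ε * t i.succ := (hN i).2
            _ ≤ Real.exp ε * ((1 + b) * t i.succ) := by
                apply mul_le_mul_of_nonneg_left _ hexp.le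
                nlinarith [hpos i.succ]
    have hseg : t ∈ openSegment ℝ x y := by
      refine ⟨1/2, 1/2, by norm_num, by norm_num, by norm_num, ?_⟩
      funext j
      simp only [Pi.add_apply, Pi.smul_apply, smul_eq_mul, hx, hy]
      split <;> ring
    have := ((mem_extremePoints.1 hext).2 _ hxQ _ hyQ hseg).1
    have h00 : x 0 = t 0 := by rw [this]
    have hP0 : ((0 : Fin (n+1)) : ℕ) ≤ (i : ℕ) := by simp
    rw [hx] at h00
    simp only [if_pos hP0] at h00
    nlinarith [hpos 0]
  · -- scale → extreme
    intro hscale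
    rw [mem_extremePoints]
    refine ⟨⟨h0, hs, hN⟩, ?_⟩
    rintro x ⟨hx0, hxs, hxN⟩ y ⟨hy0, hys, hyN⟩ ⟨a, b, ha, hb, hab, hxy⟩
    -- the recurrence coefficients
    set r : Fin n → ℝ := fun i =>
      if t i.castSucc = Real.exp ε * t i.succ then Real.exp ε else Real.exp (-ε) with hr
    have htr : ∀ i : Fin n, t i.castSucc = r i * t i.succ := by
      intro i
      simp only [hr]
      split
      · assumption
      · rcases hscale i with h | h
        · contradiction
        · exact h
    have hcomb : ∀ j, a * x j + b * y j = t j := by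
      intro j
      have := congrFun hxy j
      simpa using this
    -- tightness transfers to x and y
    have hkey : ∀ (v : Fin (n+1) → ℝ), NeighborIndist ε n v →
        (∀ j, 0 ≤ v j) → True := fun _ _ _ => trivial
    have hxr : ∀ i : Fin n, x i.castSucc = r i * x i.succ := by
      intro i
      simp only [hr]
      have hcx := hcomb i.castSucc
      have hcx' := hcomb i.succ
      split
      · rename_i heq
        have hx2 := (hxN i).2
        have hy2 := (hyN i).2
        nlinarith
      · rename_i hne
        have heq : t i.castSucc = Real.exp (-ε) * t i.succ := by
          rcases hscale i with h | h
          · contradiction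
          · exact h
        have hx1 := (hxN i).1
        have hy1 := (hyN i).1
        nlinarith
    have hyr : ∀ i : Fin n, y i.castSucc = r i * y i.succ := by
      intro i
      simp only [hr]
      have hcx := hcomb i.castSucc
      have hcx' := hcomb i.succ
      split
      · rename_i heq
        have hx2 := (hxN i).2
        have hy2 := (hyN i).2
        nlinarith
      · rename_i hne
        have heq : t i.castSucc = Real.exp (-ε) * t i.succ := by
          rcases hscale i with h | h
          · contradiction
          · exact h
        have hx1 := (hxN i).1
        have hy1 := (hyN i).1
        nlinarith
    have hlast : 0 < t (Fin.last n) := hpos _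
    have heqx : x = t := by
      have hprop := rec_prop n x t r hxr htr
      have hsum : t (Fin.last n) * ∑ j, x j = x (Fin.last n) * ∑ j, t j := by
        rw [Finset.mul_sum, Finset.mul_sum]
        exact Finset.sum_congr rfl fun j _ => hprop j
      rw [hxs, hs, mul_one, mul_one] at hsum
      funext j
      have := hprop j
      rw [← hsum] at this
      exact mul_left_cancel₀ (ne_of_gt hlast) this
    have heqy : y = t := by
      have hprop := rec_prop n y t r hyr htr
      have hsum : t (Fin.last n) * ∑ j, y j = y (Fin.last n) * ∑ j, t j := by
        rw [Finset.mul_sum, Finset.mul_sum]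
        exact Finset.sum_congr rfl fun j _ => hprop j
      rw [hys, hs, mul_one, mul_one] at hsum
      funext j
      have := hprop j
      rw [← hsum] at this
      exact mul_left_cancel₀ (ne_of_gt hlast) this
    exact ⟨heqx, heqy⟩
end

section
/- Every column of an ε-differentially private count mechanism T (a row-stochastic n × n matrix with every column ε-neighbor indistinguishable) can be written as a conic combination of ε-scales. -/
def IsScale (ε : ℝ) (n : ℕ) (s : Fin (n+1) → ℝ) : Prop :=
  (∀ i, 0 ≤ s i) ∧ (∑ i, s i = 1) ∧
  ∀ i : Fin n, s i.castSucc = Real.exp ε * s i.succ ∨ s i.castSucc = Real.exp (-ε) * s i.succ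

lemma aux_decomp (ε : ℝ) (hε : 0 < ε) (n : ℕ) (v : Fin (n+1) → ℝ)
    (hv : ∀ i, 0 ≤ v i) (h : NeighborIndist ε n v) :
    ∃ (m : ℕ) (s : Fin m → Fin (n+1) → ℝ) (α : Fin m → ℝ),
      (∀ l, IsScale ε n (s l)) ∧ (∀ l, 0 ≤ α l) ∧
      ∀ i, v i = ∑ l, α l * s l i := by
  rcases eq_or_lt_of_le (hv 0) with h0 | h0
  · -- all entries are zero
    have hz : ∀ i, v i = 0 := by
      intro i
      induction i using Fin.induction with
      | zero => exact h0.symm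
      | succ i ih =>
        have h1 := (h i).1
        have he := Real.exp_pos (-ε)
        have hvs := hv i.succ
        nlinarith [h1, he, hvs, ih]
    exact ⟨0, Fin.elim0, Fin.elim0, fun l => l.elim0, fun l => l.elim0,
      fun i => by simp [hz i]⟩
  · -- all entries are positive
    have hpos : ∀ i, 0 < v i := by
      intro i
      induction i using Fin.induction with
      | zero => exact h0
      | succ i ih =>
        have h2 := (h i).2
        have he := Real.exp_pos ε
        nlinarith [h2, he, ih]
    set r : Fin n → ℝ := fun k => v k.castSucc / v k.succ with hr_def
    have hr : ∀ k, Real.exp (-ε) ≤ r k ∧ r k ≤ Real.exp ε := by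
      intro k
      have hk := h k
      have hp := hpos k.succ
      constructor
      · rw [le_div_iff₀ hp]; exact hk.1
      · rw [div_le_iff₀ hp]; exact hk.2
    have hrv : ∀ k, v k.castSucc = r k * v k.succ := by
      intro k
      rw [hr_def]
      exact (div_mul_cancel₀ _ (hpos k.succ).ne').symm
    have hD : 0 < Real.exp ε - Real.exp (-ε) := by
      have : Real.exp (-ε) < Real.exp ε := Real.exp_lt_exp.2 (by linarith)
      linarith
    set lam : Fin n → ℝ := fun k => (Real.exp ε - r k) / (Real.exp ε - Real.exp (-ε)) with hlam_def
    have hlam0 : ∀ k, 0 ≤ lam k := fun k =>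
      div_nonneg (by linarith [(hr k).2]) hD.le
    have hlam1 : ∀ k, lam k ≤ 1 := fun k => by
      rw [hlam_def, div_le_one hD]
      linarith [(hr k).1]
    have hlamr : ∀ k, lam k * Real.exp (-ε) + (1 - lam k) * Real.exp ε = r k := by
      intro k
      have : lam k * (Real.exp ε - Real.exp (-ε)) = Real.exp ε - r k := by
        rw [hlam_def]; field_simp
      nlinarith [this]
    -- weights and ratios indexed by Bool
    set c : Bool → ℝ := fun b => if b then Real.exp (-ε) else Real.exp ε with hc_def
    have hc_pos : ∀ b, 0 < c b := by
      intro b; cases b <;> simp [hc_def, Real.exp_pos]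
    set w : Fin n → Bool → ℝ := fun k b => if b then lam k else 1 - lam k with hw_def
    have hw_nonneg : ∀ k b, 0 ≤ w k b := by
      intro k b; cases b <;> simp [hw_def]
      · linarith [hlam1 k]
      · exact hlam0 k
    -- unnormalized scale vectors
    set u : (Fin n → Bool) → Fin (n+1) → ℝ :=
      fun σ i => ∏ k : Fin n, if (i : ℕ) ≤ (k : ℕ) then c (σ k) else 1 with hu_def
    have hu_pos : ∀ σ i, 0 < u σ i := by
      intro σ i
      apply Finset.prod_pos
      intro k _
      split
      · exact hc_pos _
      · exact one_pos
    set U : (Fin n → Bool) → ℝ := fun σ => ∑ i, u σ i with hU_def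
    have hU_pos : ∀ σ, 0 < U σ :=
      fun σ => Finset.sum_pos (fun i _ => hu_pos σ i) Finset.univ_nonempty
    -- recurrence for u
    have hu_rec : ∀ σ (i : Fin n), u σ i.castSucc = c (σ i) * u σ i.succ := by
      intro σ i
      rw [hu_def]
      simp only [Fin.coe_castSucc, Fin.val_succ]
      have : ∀ k : Fin n, (if (i : ℕ) ≤ (k : ℕ) then c (σ k) else 1)
          = (if k = i then c (σ i) else 1) * (if (i : ℕ) + 1 ≤ (k : ℕ) then c (σ k) else 1) := by
        intro k
        rcases eq_or_ne k i with rfl | hk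
        · simp [Nat.lt_irrefl]
        · have : ((i : ℕ) ≤ (k : ℕ)) ↔ ((i : ℕ) + 1 ≤ (k : ℕ)) := by
            constructor
            · intro hle
              rcases Nat.lt_or_ge (i : ℕ) (k : ℕ) with hlt | hge
              · omega
              · exfalso; exact hk (Fin.ext (by omega))
            · omega
          simp [hk, this]
      rw [Finset.prod_congr rfl (fun k _ => this k), Finset.prod_mul_distrib,
        Finset.prod_ite_eq' Finset.univ i (fun _ => c (σ i))]
      simp
    -- scales
    set S : (Fin n → Bool) → Fin (n+1) → ℝ := fun σ i => u σ i / U σ with hS_def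
    have hScale : ∀ σ, IsScale ε n (S σ) := by
      intro σ
      refine ⟨fun i => div_nonneg (hu_pos σ i).le (hU_pos σ).le, ?_, ?_⟩
      · rw [hS_def]
        rw [← Finset.sum_div]
        exact div_self (hU_pos σ).ne'
      · intro i
        have hrec : S σ i.castSucc = c (σ i) * S σ i.succ := by
          rw [hS_def]
          simp only
          rw [hu_rec σ i, mul_div_assoc]
        cases hb : σ i
        · left; rw [hrec, hb]; simp [hc_def]
        · right; rw [hrec, hb]; simp [hc_def]
    -- coefficients
    set α : (Fin n → Bool) → ℝ := fun σ => v (Fin.last n) * (∏ k, w k (σ k)) * U σ with hα_def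
    have hα_nonneg : ∀ σ, 0 ≤ α σ := by
      intro σ
      apply mul_nonneg (mul_nonneg (hpos _).le _) (hU_pos σ).le
      exact Finset.prod_nonneg (fun k _ => hw_nonneg k (σ k))
    -- telescoping
    have htel : ∀ i : Fin (n+1),
        v i = v (Fin.last n) * ∏ k ∈ Finset.univ.filter (fun k : Fin n => (i : ℕ) ≤ (k : ℕ)), r k := by
      intro i
      induction i using Fin.reverseInduction with
      | last =>
        have : Finset.univ.filter (fun k : Fin n => (Fin.last n : ℕ) ≤ (k : ℕ)) = ∅ := by
          apply Finset.filter_false_of_mem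
          intro k _
          simp [Fin.last]
        rw [this]
        simp
      | cast i ih =>
        have hset : Finset.univ.filter (fun k : Fin n => (i.castSucc : ℕ) ≤ (k : ℕ))
            = insert i (Finset.univ.filter (fun k : Fin n => (i.succ : ℕ) ≤ (k : ℕ))) := by
          ext k
          simp only [Finset.mem_filter, Finset.mem_univ, true_and, Finset.mem_insert,
            Fin.coe_castSucc, Fin.val_succ]
          constructor
          · intro hle
            rcases eq_or_ne k i with rfl | hk
            · exact Or.inl rfl
            · right
              have : (k : ℕ) ≠ (i : ℕ) := fun hh => hk (Fin.ext hh)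
              omega
          · rintro (rfl | hle)
            · omega
            · omega
        have hnotmem : i ∉ Finset.univ.filter (fun k : Fin n => (i.succ : ℕ) ≤ (k : ℕ)) := by
          simp [Fin.val_succ]
        rw [hset, Finset.prod_insert hnotmem, hrv i, ih]
        ring
    -- main computation
    have hmain : ∀ i, v i = ∑ σ : Fin n → Bool, α σ * S σ i := by
      intro i
      have hterm : ∀ σ, α σ * S σ i
          = v (Fin.last n) * ∏ k, (w k (σ k) * if (i : ℕ) ≤ (k : ℕ) then c (σ k) else 1) := by
        intro σ
        rw [hα_def, hS_def]
        simp only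
        rw [Finset.prod_mul_distrib]
        field_simp [(hU_pos σ).ne']
        ring
      rw [Finset.sum_congr rfl (fun σ _ => hterm σ), ← Finset.mul_sum]
      have hps : ∑ σ : Fin n → Bool, ∏ k, (w k (σ k) * if (i : ℕ) ≤ (k : ℕ) then c (σ k) else 1)
          = ∏ k : Fin n, ∑ b : Bool, (w k b * if (i : ℕ) ≤ (k : ℕ) then c b else 1) := by
        rw [Finset.prod_univ_sum]
        rw [Fintype.piFinset_univ]
      rw [hps]
      have hfac : ∀ k : Fin n, (∑ b : Bool, (w k b * if (i : ℕ) ≤ (k : ℕ) then c b else 1))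
          = if (i : ℕ) ≤ (k : ℕ) then r k else 1 := by
        intro k
        rw [Fintype.sum_bool]
        by_cases hik : (i : ℕ) ≤ (k : ℕ)
        · simp only [hik, if_true, hw_def, hc_def]
          simp only [if_true, if_false, Bool.false_eq_true]
          rw [← hlamr k]
        · simp only [hik, if_false, hw_def]
          simp only [if_true, if_false, Bool.false_eq_true, mul_one]
          ring
      rw [Finset.prod_congr rfl (fun k _ => hfac k), ← Finset.prod_filter]
      exact htel i
    -- transfer to Fin m
    classical
    let m := Fintype.card (Fin n → Bool)
    let e := Fintype.equivFin (Fin n → Bool)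
    refine ⟨m, fun l => S (e.symm l), fun l => α (e.symm l),
      fun l => hScale _, fun l => hα_nonneg _, fun i => ?_⟩
    rw [hmain i]
    exact (Equiv.sum_comp e.symm fun σ => α σ * S σ i).symm

/-- Every column of an ε-differentially private count mechanism can be written as a
conic combination of ε-scales. -/
theorem stmt5 (ε : ℝ) (hε : 0 < ε) (n : ℕ)
    (T : Matrix (Fin (n+1)) (Fin (n+1)) ℝ)
    (hpos : ∀ i j, 0 ≤ T i j) (hrow : ∀ i, ∑ j, T i j = 1)
    (hcol : ∀ j, NeighborIndist ε n (fun i => T i j)) (j : Fin (n+1)) :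
    ∃ (m : ℕ) (s : Fin m → Fin (n+1) → ℝ) (α : Fin m → ℝ),
      (∀ l, IsScale ε n (s l)) ∧ (∀ l, 0 ≤ α l) ∧
      ∀ i, T i j = ∑ l, α l * s l i := by
  exact aux_decomp ε hε n (fun i => T i j) (fun i => hpos i j) (hcol j)
end

section
/- Let U be the polytope of ε-differentially private count mechanisms. If T ∈ U has all entries strictly positive, then T is an extreme point of U if and only if the columns of T are linearly independent positive multiples of ε-scales. -/
open Filter Topology

private lemma ev_lt (c1 c2 d1 d2 : ℝ) (h : c1 < c2) :
    ∀ᶠ δ in 𝓝[>] (0:ℝ), c1 + δ * d1 < c2 + δ * d2 := by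
  have ht : Tendsto (fun δ : ℝ => (c2 + δ * d2) - (c1 + δ * d1)) (𝓝[>] (0:ℝ))
      (𝓝 ((c2 + 0 * d2) - (c1 + 0 * d1))) :=
    ((Continuous.tendsto (by fun_prop) 0).mono_left nhdsWithin_le_nhds)
  have h0 : (0:ℝ) < (c2 + 0 * d2) - (c1 + 0 * d1) := by simpa using sub_pos.2 h
  filter_upwards [ht.eventually (eventually_gt_nhds h0)] with δ hδ
  linarith

private lemma chain_prop {n : ℕ} (t u : Fin (n+1) → ℝ)
    (h : ∀ i : Fin n, ∃ r : ℝ, t i.castSucc = r * t i.succ ∧ u i.castSucc = r * u i.succ) :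
    ∀ k, u k * t (Fin.last n) = u (Fin.last n) * t k := by
  intro k
  induction k using Fin.reverseInduction with
  | last => ring
  | cast i ih =>
    obtain ⟨r, ht, hu⟩ := h i
    rw [ht, hu]; linear_combination r * ih

private lemma eq_of_tight {n : ℕ} (T W : Matrix (Fin (n+1)) (Fin (n+1)) ℝ)
    (hposT : ∀ i j, 0 < T i j)
    (hrowT : ∀ i, ∑ j, T i j = 1) (hrowW : ∀ i, ∑ j, W i j = 1)
    (hli : LinearIndependent ℝ (fun j : Fin (n+1) => fun i => T i j))
    (h : ∀ j, ∀ i : Fin n, ∃ r : ℝ, T i.castSucc j = r * T i.succ j ∧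
      W i.castSucc j = r * W i.succ j) :
    W = T := by
  set L := Fin.last n with hL
  have hcol : ∀ j k, W k j = (W L j / T L j) * T k j := by
    intro j k
    have hc := chain_prop (fun k => T k j) (fun k => W k j) (h j) k
    have hTL : T L j ≠ 0 := (hposT L j).ne'
    rw [div_mul_eq_mul_div, eq_div_iff hTL]
    linarith [hc]
  have hsum : ∀ k, ∑ j, (W L j / T L j - 1) * T k j = 0 := by
    intro k
    have h1 : ∑ j, (W L j / T L j) * T k j = 1 := by
      rw [← hrowW k]; exact Finset.sum_congr rfl fun j _ => (hcol j k).symm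
    have h2 : ∑ j, (W L j / T L j - 1) * T k j
        = (∑ j, (W L j / T L j) * T k j) - ∑ j, T k j := by
      rw [← Finset.sum_sub_distrib]; exact Finset.sum_congr rfl fun j _ => by ring
    rw [h2, h1, hrowT k]; ring
  have hμ1 : ∀ j, W L j / T L j - 1 = 0 := by
    apply Fintype.linearIndependent_iff.mp hli (fun j => W L j / T L j - 1)
    funext k
    simpa [Finset.sum_apply] using hsum k
  ext k j
  have := hμ1 j
  have hj : W L j / T L j = 1 := by linarith
  rw [hcol j k, hj, one_mul]

private lemma not_extreme_of_pert (ε : ℝ) {n : ℕ}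
    (T : Matrix (Fin (n+1)) (Fin (n+1)) ℝ)
    (hpos : ∀ i j, 0 < T i j) (hrow : ∀ i, ∑ j, T i j = 1)
    (hnb : ∀ j, NeighborIndist ε n (fun i => T i j))
    (ρ : Fin (n+1) → Fin (n+1) → ℝ)
    (hsum : ∀ k, ∑ j, ρ k j * T k j = 0)
    (hbd : ∀ j (i : Fin n), ρ i.castSucc j = ρ i.succ j ∨
      (Real.exp (-ε) * T i.succ j < T i.castSucc j ∧ T i.castSucc j < Real.exp ε * T i.succ j))
    (k0 j0 : Fin (n+1)) (hne : ρ k0 j0 ≠ 0) :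
    ∃ Y Z : Matrix (Fin (n+1)) (Fin (n+1)) ℝ,
      (Y ∈ {T' : Matrix (Fin (n+1)) (Fin (n+1)) ℝ | (∀ i j, 0 ≤ T' i j) ∧
        (∀ i, ∑ j, T' i j = 1) ∧ ∀ j, NeighborIndist ε n (fun i => T' i j)}) ∧
      (Z ∈ {T' : Matrix (Fin (n+1)) (Fin (n+1)) ℝ | (∀ i j, 0 ≤ T' i j) ∧
        (∀ i, ∑ j, T' i j = 1) ∧ ∀ j, NeighborIndist ε n (fun i => T' i j)}) ∧
      T ∈ openSegment ℝ Y Z ∧ Y ≠ T := by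
  have key : ∀ s : ℝ, (∀ k j, 0 < 1 + s * ρ k j) →
      (∀ j (i : Fin n), ρ i.castSucc j ≠ ρ i.succ j →
        (Real.exp (-ε) * ((1 + s * ρ i.succ j) * T i.succ j)
            ≤ (1 + s * ρ i.castSucc j) * T i.castSucc j ∧
          (1 + s * ρ i.castSucc j) * T i.castSucc j
            ≤ Real.exp ε * ((1 + s * ρ i.succ j) * T i.succ j))) →
      (Matrix.of fun k j => (1 + s * ρ k j) * T k j) ∈
        {T' : Matrix (Fin (n+1)) (Fin (n+1)) ℝ | (∀ i j, 0 ≤ T' i j) ∧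
          (∀ i, ∑ j, T' i j = 1) ∧ ∀ j, NeighborIndist ε n (fun i => T' i j)} := by
    intro s h1 h2
    refine ⟨fun i j => mul_nonneg (h1 i j).le (hpos i j).le, fun k => ?_, fun j i => ?_⟩
    · have : ∑ j, (1 + s * ρ k j) * T k j = (∑ j, T k j) + s * ∑ j, ρ k j * T k j := by
        rw [Finset.mul_sum, ← Finset.sum_add_distrib]
        exact Finset.sum_congr rfl fun j _ => by ring
      simp only [Matrix.of_apply]
      rw [this, hsum k, hrow k]; ring
    · by_cases hr : ρ i.castSucc j = ρ i.succ j
      · have h0 : (0:ℝ) ≤ 1 + s * ρ i.succ j := (h1 i.succ j).le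
        have hb := hnb j i
        simp only [Matrix.of_apply, hr]
        constructor
        · calc Real.exp (-ε) * ((1 + s * ρ i.succ j) * T i.succ j)
              = (1 + s * ρ i.succ j) * (Real.exp (-ε) * T i.succ j) := by ring
            _ ≤ (1 + s * ρ i.succ j) * T i.castSucc j :=
              mul_le_mul_of_nonneg_left hb.1 h0
        · calc (1 + s * ρ i.succ j) * T i.castSucc j
              ≤ (1 + s * ρ i.succ j) * (Real.exp ε * T i.succ j) :=
              mul_le_mul_of_nonneg_left hb.2 h0
            _ = Real.exp ε * ((1 + s * ρ i.succ j) * T i.succ j) := by ring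
      · exact h2 j i hr
  have E1 : ∀ᶠ δ in 𝓝[>] (0:ℝ), ∀ k j, 0 < 1 + δ * ρ k j ∧ 0 < 1 + (-δ) * ρ k j := by
    rw [eventually_all]; intro k; rw [eventually_all]; intro j
    have a1 := ev_lt 0 1 0 (ρ k j) one_pos
    have a2 := ev_lt 0 1 0 (-ρ k j) one_pos
    filter_upwards [a1, a2] with δ b1 b2
    constructor <;> nlinarith
  have E2 : ∀ᶠ δ in 𝓝[>] (0:ℝ), ∀ j (i : Fin n), ρ i.castSucc j ≠ ρ i.succ j →
      (∀ s ∈ ({δ, -δ} : Set ℝ),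
        Real.exp (-ε) * ((1 + s * ρ i.succ j) * T i.succ j)
            ≤ (1 + s * ρ i.castSucc j) * T i.castSucc j ∧
          (1 + s * ρ i.castSucc j) * T i.castSucc j
            ≤ Real.exp ε * ((1 + s * ρ i.succ j) * T i.succ j)) := by
    rw [eventually_all]; intro j; rw [eventually_all]; intro i
    by_cases hr : ρ i.castSucc j = ρ i.succ j
    · exact Eventually.of_forall fun δ h => absurd hr h
    · obtain ⟨hs1, hs2⟩ := (hbd j i).resolve_left hr
      set tc := T i.castSucc j
      set ts := T i.succ j
      set pc := ρ i.castSucc j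
      set ps := ρ i.succ j
      have a1 := ev_lt (Real.exp (-ε) * ts) tc (ps * (Real.exp (-ε) * ts)) (pc * tc) hs1
      have a2 := ev_lt (Real.exp (-ε) * ts) tc (-(ps * (Real.exp (-ε) * ts))) (-(pc * tc)) hs1
      have a3 := ev_lt tc (Real.exp ε * ts) (pc * tc) (ps * (Real.exp ε * ts)) hs2
      have a4 := ev_lt tc (Real.exp ε * ts) (-(pc * tc)) (-(ps * (Real.exp ε * ts))) hs2
      filter_upwards [a1, a2, a3, a4] with δ b1 b2 b3 b4 _ s hs
      rcases hs with rfl | hs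
      · constructor <;> nlinarith
      · rw [Set.mem_singleton_iff] at hs; subst hs
        constructor <;> nlinarith
  obtain ⟨δ, hδ1, hδ2, hδpos⟩ := (E1.and (E2.and self_mem_nhdsWithin)).exists
  refine ⟨Matrix.of fun k j => (1 + (-δ) * ρ k j) * T k j,
    Matrix.of fun k j => (1 + δ * ρ k j) * T k j, ?_, ?_, ?_, ?_⟩
  · exact key (-δ) (fun k j => (hδ1 k j).2)
      (fun j i h => hδ2 j i h (-δ) (by simp))
  · exact key δ (fun k j => (hδ1 k j).1)
      (fun j i h => hδ2 j i h δ (by simp))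
  · refine ⟨1/2, 1/2, by norm_num, by norm_num, by norm_num, ?_⟩
    ext k j
    simp only [Matrix.add_apply, Matrix.smul_apply, Matrix.of_apply, smul_eq_mul]
    ring
  · intro hYT
    have he : (1 + (-δ) * ρ k0 j0) * T k0 j0 = T k0 j0 := by
      rw [← Matrix.ext_iff] at hYT
      simpa [Matrix.of_apply] using hYT k0 j0
    have hz : δ * ρ k0 j0 * T k0 j0 = 0 := by linarith [he]
    rcases mul_eq_zero.mp hz with h | h
    · rcases mul_eq_zero.mp h with h | h
      · exact hδpos.ne' h
      · exact hne h
    · exact (hpos k0 j0).ne' h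

/-- For T in the polytope U of ε-differentially private count mechanisms with all
entries strictly positive, T is an extreme point of U iff its columns are linearly
independent positive multiples of ε-scales. -/
theorem stmt6 (ε : ℝ) (hε : 0 < ε) (n : ℕ)
    (U : Set (Matrix (Fin (n+1)) (Fin (n+1)) ℝ))
    (hU : U = {T | (∀ i j, 0 ≤ T i j) ∧ (∀ i, ∑ j, T i j = 1) ∧
      ∀ j, NeighborIndist ε n (fun i => T i j)})
    (T : Matrix (Fin (n+1)) (Fin (n+1)) ℝ) (hT : T ∈ U) (hpos : ∀ i j, 0 < T i j) :
    T ∈ U.extremePoints ℝ ↔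
      (LinearIndependent ℝ (fun j : Fin (n+1) => fun i => T i j)) ∧
      ∀ j, ∃ (c : ℝ) (s : Fin (n+1) → ℝ), 0 < c ∧ IsScale ε n s ∧
        (fun i => T i j) = c • s := by
  subst hU
  obtain ⟨hnn, hrow, hnb⟩ := hT
  constructor
  · -- forward direction
    intro hext
    rw [mem_extremePoints] at hext
    have hli : LinearIndependent ℝ (fun j : Fin (n+1) => fun i => T i j) := by
      by_contra hnl
      obtain ⟨g, hg0, j1, hj1⟩ := Fintype.not_linearIndependent_iff.mp hnl
      obtain ⟨Y, Z, hY, hZ, hseg, hYne⟩ := not_extreme_of_pert ε T hpos hrow hnb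
        (fun _ j => g j)
        (fun k => by
          have := congrFun hg0 k
          simpa [Finset.sum_apply] using this)
        (fun j i => Or.inl rfl) 0 j1 hj1
      exact hYne (hext.2 Y hY Z hZ hseg).1
    refine ⟨hli, fun j0 => ?_⟩
    by_cases hall : ∀ i : Fin n, T i.castSucc j0 = Real.exp ε * T i.succ j0 ∨
        T i.castSucc j0 = Real.exp (-ε) * T i.succ j0
    · -- column j0 is tight everywhere: it is a multiple of a scale
      set c : ℝ := ∑ i, T i j0 with hc
      have hcpos : 0 < c := Finset.sum_pos (fun i _ => hpos i j0) Finset.univ_nonempty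
      refine ⟨c, fun i => T i j0 / c, hcpos, ⟨?_, ?_, ?_⟩, ?_⟩
      · exact fun i => div_nonneg (hpos i j0).le hcpos.le
      · rw [← Finset.sum_div, ← hc, div_self hcpos.ne']
      · intro i
        rcases hall i with h | h
        · left
          show T i.castSucc j0 / c = Real.exp ε * (T i.succ j0 / c)
          rw [h, mul_div_assoc]
        · right
          show T i.castSucc j0 / c = Real.exp (-ε) * (T i.succ j0 / c)
          rw [h, mul_div_assoc]
      · funext k
        simp only [Pi.smul_apply, smul_eq_mul]
        field_simp
    · exfalso
      push_neg at hall
      obtain ⟨i0, hne1, hne2⟩ := hall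
      have hstrict1 : Real.exp (-ε) * T i0.succ j0 < T i0.castSucc j0 :=
        lt_of_le_of_ne (hnb j0 i0).1 (fun h => hne2 h.symm)
      have hstrict2 : T i0.castSucc j0 < Real.exp ε * T i0.succ j0 :=
        lt_of_le_of_ne (hnb j0 i0).2 hne1
      have hcard : Fintype.card (Fin (n+1)) = Module.finrank ℝ (Fin (n+1) → ℝ) := by simp
      obtain ⟨B, hB⟩ : ∃ B : Module.Basis (Fin (n+1)) ℝ (Fin (n+1) → ℝ),
          ∀ j, B j = fun i => T i j :=
        ⟨basisOfLinearIndependentOfCardEqFinrank hli hcard, fun j =>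
          congrFun (coe_basisOfLinearIndependentOfCardEqFinrank hli hcard) j⟩
      set u : Fin (n+1) → ℝ := fun k => if k ≤ i0.castSucc then T k j0 else 0 with hu
      set γ : Fin (n+1) → ℝ := fun j => B.repr u j with hγ
      have hrepr : ∑ j, γ j • (fun i => T i j) = u := by
        have := B.sum_repr u
        simp only [hB] at this
        exact this
      set ρ : Fin (n+1) → Fin (n+1) → ℝ := fun k j =>
        (if j = j0 then (if k ≤ i0.castSucc then (1:ℝ) else 0) else 0) - γ j with hρ
      have hsum : ∀ k, ∑ j, ρ k j * T k j = 0 := by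
        intro k
        have hA : ∑ j, (if j = j0 then (if k ≤ i0.castSucc then (1:ℝ) else 0) else 0) * T k j
            = (if k ≤ i0.castSucc then (1:ℝ) else 0) * T k j0 := by
          rw [Finset.sum_eq_single j0]
          · simp
          · intro b _ hb; simp [hb]
          · intro h; exact absurd (Finset.mem_univ j0) h
        have hB2 : ∑ j, γ j * T k j = u k := by
          have := congrFun hrepr k
          simpa [Finset.sum_apply] using this
        have hsplit : ∑ j, ρ k j * T k j =
            (∑ j, (if j = j0 then (if k ≤ i0.castSucc then (1:ℝ) else 0) else 0) * T k j)
              - ∑ j, γ j * T k j := by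
          rw [← Finset.sum_sub_distrib]
          exact Finset.sum_congr rfl fun j _ => by simp only [hρ]; ring
        rw [hsplit, hA, hB2]
        by_cases h : k ≤ i0.castSucc <;> simp [hu, h]
      have hbd : ∀ j (i : Fin n), ρ i.castSucc j = ρ i.succ j ∨
          (Real.exp (-ε) * T i.succ j < T i.castSucc j ∧
            T i.castSucc j < Real.exp ε * T i.succ j) := by
        intro j i
        by_cases hj : j = j0
        · subst hj
          by_cases hi : i = i0
          · subst hi; exact Or.inr ⟨hstrict1, hstrict2⟩
          · left
            have hval : i.val ≠ i0.val := fun h => hi (Fin.ext h)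
            have hiff : (i.castSucc ≤ i0.castSucc) ↔ (i.succ ≤ i0.castSucc) := by
              simp only [Fin.le_def, Fin.coe_castSucc, Fin.val_succ]
              omega
            simp only [hρ, if_pos rfl]
            rw [if_congr hiff rfl rfl]
        · left; simp only [hρ, if_neg hj]
      have hne : ∃ k0, ρ k0 j0 ≠ 0 := by
        by_cases hγ0 : γ j0 = 0
        · refine ⟨0, ?_⟩
          simp [hρ, hγ0, Fin.zero_le]
        · refine ⟨i0.succ, ?_⟩
          have : ¬ (i0.succ ≤ i0.castSucc) := by
            simp only [Fin.le_def, Fin.coe_castSucc, Fin.val_succ]; omega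
          simp [hρ, this, hγ0]
      obtain ⟨k0, hk0⟩ := hne
      obtain ⟨Y, Z, hY, hZ, hseg, hYne⟩ :=
        not_extreme_of_pert ε T hpos hrow hnb ρ hsum hbd k0 j0 hk0
      exact hYne (hext.2 Y hY Z hZ hseg).1
  · -- backward direction
    rintro ⟨hli, hscale⟩
    rw [mem_extremePoints]
    refine ⟨⟨hnn, hrow, hnb⟩, fun Y hY Z hZ hseg => ?_⟩
    obtain ⟨a, b, ha, hb, hab, habeq⟩ := hseg
    have hcomb : ∀ k j, a * Y k j + b * Z k j = T k j := by
      intro k j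
      have := congrFun (congrFun habeq k) j
      simpa [Matrix.add_apply, Matrix.smul_apply, smul_eq_mul] using this
    have htight : ∀ j (i : Fin n), ∃ r : ℝ, T i.castSucc j = r * T i.succ j ∧
        Y i.castSucc j = r * Y i.succ j ∧ Z i.castSucc j = r * Z i.succ j := by
      intro j i
      obtain ⟨c, s, hc, ⟨hs0, hs1, hsr⟩, hcol⟩ := hscale j
      have hTj : ∀ k, T k j = c * s k := by
        intro k
        have := congrFun hcol k
        simpa using this
      have hYb := hY.2.2 j i
      have hZb := hZ.2.2 j i
      have hcc := hcomb i.castSucc j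
      have hcs := hcomb i.succ j
      rcases hsr i with hcase | hcase
      · have k1 : Y i.castSucc j ≤ Real.exp ε * Y i.succ j := hYb.2
        have k2 : Z i.castSucc j ≤ Real.exp ε * Z i.succ j := hZb.2
        have k3 : T i.castSucc j = Real.exp ε * T i.succ j := by
          rw [hTj, hTj, hcase]; ring
        have hT' : T i.castSucc j = Real.exp ε * (a * Y i.succ j + b * Z i.succ j) := by
          rw [hcs]; exact k3
        refine ⟨Real.exp ε, k3, ?_, ?_⟩
        · have h1 : b * Z i.castSucc j ≤ b * (Real.exp ε * Z i.succ j) :=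
            mul_le_mul_of_nonneg_left k2 hb.le
          have hge : Real.exp ε * Y i.succ j ≤ Y i.castSucc j := by nlinarith [h1, hT', hcc, ha]
          linarith
        · have h1 : a * Y i.castSucc j ≤ a * (Real.exp ε * Y i.succ j) :=
            mul_le_mul_of_nonneg_left k1 ha.le
          have hge : Real.exp ε * Z i.succ j ≤ Z i.castSucc j := by nlinarith [h1, hT', hcc, hb]
          linarith
      · have k1 : Real.exp (-ε) * Y i.succ j ≤ Y i.castSucc j := hYb.1
        have k2 : Real.exp (-ε) * Z i.succ j ≤ Z i.castSucc j := hZb.1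
        have k3 : T i.castSucc j = Real.exp (-ε) * T i.succ j := by
          rw [hTj, hTj, hcase]; ring
        have hT' : T i.castSucc j = Real.exp (-ε) * (a * Y i.succ j + b * Z i.succ j) := by
          rw [hcs]; exact k3
        refine ⟨Real.exp (-ε), k3, ?_, ?_⟩
        · have h1 : b * (Real.exp (-ε) * Z i.succ j) ≤ b * Z i.castSucc j :=
            mul_le_mul_of_nonneg_left k2 hb.le
          have hle : Y i.castSucc j ≤ Real.exp (-ε) * Y i.succ j := by nlinarith [h1, hT', hcc, ha]
          linarith
        · have h1 : a * (Real.exp (-ε) * Y i.succ j) ≤ a * Y i.castSucc j :=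
            mul_le_mul_of_nonneg_left k1 ha.le
          have hle : Z i.castSucc j ≤ Real.exp (-ε) * Z i.succ j := by nlinarith [h1, hT', hcc, hb]
          linarith
    constructor
    · exact eq_of_tight T Y hpos hrow hY.2.1 hli
        (fun j i => (htight j i).imp fun r hr => ⟨hr.1, hr.2.1⟩)
    · exact eq_of_tight T Z hpos hrow hZ.2.1 hli
        (fun j i => (htight j i).imp fun r hr => ⟨hr.1, hr.2.2⟩)
end

section
/- Let Ψ be the n × k matrix whose columns are the k = 2^{n-1} ε-scales, and let R_U = {B ∈ ℝ^{k×n} : B has nonnegative entries and ΨB𝟙_n = 𝟙_n}. Then the map B ↦ ΨB is a surjection from R_U onto U, the set of ε-differentially private count mechanisms. -/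
noncomputable def fB (ε : ℝ) (b : Bool) : ℝ := if b then Real.exp ε else Real.exp (-ε)

lemma fB_pos (ε : ℝ) (b : Bool) : 0 < fB ε b := by
  unfold fB; split <;> exact Real.exp_pos _

lemma prod_split {n : ℕ} (i : Fin n) (h : Fin n → ℝ) :
    (∏ l : Fin n, if (i:ℕ) ≤ (l:ℕ) then h l else 1)
      = h i * ∏ l : Fin n, if (i:ℕ)+1 ≤ (l:ℕ) then h l else 1 := by
  have key : ∀ l : Fin n, (if (i:ℕ) ≤ (l:ℕ) then h l else 1)
      = (if l = i then h l else 1) * (if (i:ℕ)+1 ≤ (l:ℕ) then h l else 1) := by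
    intro l
    rcases lt_trichotomy (l:ℕ) (i:ℕ) with hlt | heq | hgt
    · rw [if_neg (by omega), if_neg (by intro hh; subst hh; omega), if_neg (by omega)]; ring
    · have hli : l = i := Fin.ext heq
      subst hli
      rw [if_pos le_rfl, if_pos rfl, if_neg (by omega)]; ring
    · rw [if_pos (by omega), if_neg (by intro hh; subst hh; omega), if_pos (by omega)]; ring
  rw [Finset.prod_congr rfl (fun l _ => key l), Finset.prod_mul_distrib,
    Finset.prod_ite_eq' Finset.univ i h, if_pos (Finset.mem_univ i)]

noncomputable def uS (ε : ℝ) {n : ℕ} (σ : Fin n → Bool) (i : Fin (n+1)) : ℝ :=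
  ∏ l : Fin n, if (i:ℕ) ≤ (l:ℕ) then fB ε (σ l) else 1

lemma uS_pos (ε : ℝ) {n : ℕ} (σ : Fin n → Bool) (i : Fin (n+1)) : 0 < uS ε σ i := by
  apply Finset.prod_pos
  intro l _
  split
  · exact fB_pos ε _
  · exact one_pos

lemma uS_castSucc (ε : ℝ) {n : ℕ} (σ : Fin n → Bool) (i : Fin n) :
    uS ε σ i.castSucc = fB ε (σ i) * uS ε σ i.succ := by
  unfold uS
  simp only [Fin.coe_castSucc, Fin.val_succ]
  exact prod_split i _

noncomputable def SS (ε : ℝ) {n : ℕ} (σ : Fin n → Bool) : ℝ := ∑ i, uS ε σ i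

lemma SS_pos (ε : ℝ) {n : ℕ} (σ : Fin n → Bool) : 0 < SS ε σ :=
  Finset.sum_pos (fun i _ => uS_pos ε σ i) Finset.univ_nonempty

noncomputable def scaleS (ε : ℝ) {n : ℕ} (σ : Fin n → Bool) : Fin (n+1) → ℝ :=
  fun i => uS ε σ i / SS ε σ

lemma scaleS_pos (ε : ℝ) {n : ℕ} (σ : Fin n → Bool) (i : Fin (n+1)) :
    0 < scaleS ε σ i := div_pos (uS_pos ε σ i) (SS_pos ε σ)

lemma scaleS_isScale (ε : ℝ) {n : ℕ} (σ : Fin n → Bool) : IsScale ε n (scaleS ε σ) := by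
  refine ⟨fun i => (scaleS_pos ε σ i).le, ?_, ?_⟩
  · unfold scaleS
    rw [← Finset.sum_div]
    exact div_self (SS_pos ε σ).ne'
  · intro i
    have h : scaleS ε σ i.castSucc = fB ε (σ i) * scaleS ε σ i.succ := by
      unfold scaleS
      rw [uS_castSucc, mul_div_assoc]
    cases hb : σ i with
    | true => left; rw [h, hb]; rfl
    | false => right; rw [h, hb]; rfl

lemma scaleS_inj (ε : ℝ) (hε : 0 < ε) {n : ℕ} :
    Function.Injective (scaleS ε (n := n)) := by
  intro σ σ' h
  funext i
  have h1 : scaleS ε σ i.castSucc = fB ε (σ i) * scaleS ε σ i.succ := by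
    unfold scaleS; rw [uS_castSucc, mul_div_assoc]
  have h2 : scaleS ε σ' i.castSucc = fB ε (σ' i) * scaleS ε σ' i.succ := by
    unfold scaleS; rw [uS_castSucc, mul_div_assoc]
  rw [h] at h1
  rw [h1] at h2
  have h3 : fB ε (σ i) = fB ε (σ' i) :=
    mul_right_cancel₀ (scaleS_pos ε σ' i.succ).ne' h2
  cases hb : σ i <;> cases hb' : σ' i <;>
    first
      | rfl
      | (rw [hb, hb'] at h3; simp [fB] at h3; linarith)

lemma telescope {n : ℕ} (v : Fin (n+1) → ℝ) (hv : ∀ i, 0 < v i) (i : Fin (n+1)) :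
    v (Fin.last n) * ∏ l : Fin n,
      (if (i:ℕ) ≤ (l:ℕ) then v l.castSucc / v l.succ else 1) = v i := by
  induction i using Fin.reverseInduction with
  | last =>
    have hone : ∀ l : Fin n, (if ((Fin.last n : Fin (n+1)):ℕ) ≤ (l:ℕ)
        then v l.castSucc / v l.succ else 1) = 1 := by
      intro l
      rw [if_neg]
      simp only [Fin.val_last]
      omega
    rw [Finset.prod_congr rfl (fun l _ => hone l), Finset.prod_const_one, mul_one]
  | cast i ih =>
    have hsplit := prod_split i (fun l => v l.castSucc / v l.succ)
    simp only [Fin.coe_castSucc]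
    rw [hsplit]
    have hcoe : ((i.succ : Fin (n+1)):ℕ) = (i:ℕ) + 1 := rfl
    rw [← hcoe] at *
    calc v (Fin.last n) * (v i.castSucc / v i.succ *
          ∏ l : Fin n, if ((i.succ : Fin (n+1)):ℕ) ≤ (l:ℕ) then v l.castSucc / v l.succ else 1)
        = v i.castSucc / v i.succ * (v (Fin.last n) *
          ∏ l : Fin n, if ((i.succ : Fin (n+1)):ℕ) ≤ (l:ℕ) then v l.castSucc / v l.succ else 1) := by
          ring
      _ = v i.castSucc / v i.succ * v i.succ := by rw [ih]
      _ = v i.castSucc := div_mul_cancel₀ _ (hv i.succ).ne'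

lemma all_zero_or_pos {n : ℕ} (ε : ℝ) (v : Fin (n+1) → ℝ)
    (hnn : ∀ i, 0 ≤ v i) (hni : NeighborIndist ε n v) :
    (∀ i, v i = 0) ∨ (∀ i, 0 < v i) := by
  by_cases h0 : v (Fin.last n) = 0
  · left
    intro i
    induction i using Fin.reverseInduction with
    | last => exact h0
    | cast i ih =>
      have := (hni i).2
      rw [ih, mul_zero] at this
      exact le_antisymm this (hnn _)
  · right
    intro i
    induction i using Fin.reverseInduction with
    | last => exact lt_of_le_of_ne (hnn _) (Ne.symm h0)
    | cast i ih =>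
      have := (hni i).1
      have h1 : 0 < Real.exp (-ε) * v i.succ := mul_pos (Real.exp_pos _) ih
      linarith

lemma decompose (ε : ℝ) (hε : 0 < ε) (n : ℕ) (v : Fin (n+1) → ℝ)
    (hnn : ∀ i, 0 ≤ v i) (hni : NeighborIndist ε n v) :
    ∃ w : (Fin n → Bool) → ℝ, (∀ σ, 0 ≤ w σ) ∧
      ∀ i, (∑ σ, w σ * scaleS ε σ i) = v i := by
  rcases all_zero_or_pos ε v hnn hni with hz | hv
  · exact ⟨0, fun σ => le_rfl, fun i => by simp [hz i]⟩
  set E := Real.exp ε with hE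
  set E' := Real.exp (-ε) with hE'
  have hEE : E' < E := Real.exp_lt_exp.2 (by linarith)
  have hEne : E - E' ≠ 0 := (sub_pos.2 hEE).ne'
  set lam : Fin n → ℝ := fun l => (v l.castSucc / v l.succ - E') / (E - E') with hlam
  have hr_lb : ∀ l : Fin n, E' ≤ v l.castSucc / v l.succ := by
    intro l
    rw [le_div_iff₀ (hv l.succ)]
    exact (mul_comm E' _) ▸ (hni l).1
  have hr_ub : ∀ l : Fin n, v l.castSucc / v l.succ ≤ E := by
    intro l
    rw [div_le_iff₀ (hv l.succ)]
    exact (mul_comm E _) ▸ (hni l).2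
  have hl0 : ∀ l, 0 ≤ lam l := fun l =>
    div_nonneg (sub_nonneg.2 (hr_lb l)) (sub_nonneg.2 hEE.le)
  have hl1 : ∀ l, lam l ≤ 1 := fun l =>
    (div_le_one (sub_pos.2 hEE)).2 (by linarith [hr_ub l])
  have hkey : ∀ l : Fin n, lam l * E + (1 - lam l) * E' = v l.castSucc / v l.succ := by
    intro l
    rw [hlam]
    field_simp
    ring
  refine ⟨fun σ => v (Fin.last n) * (∏ l, if σ l then lam l else 1 - lam l) * SS ε σ,
    ?_, ?_⟩
  · intro σ
    refine mul_nonneg (mul_nonneg (hv _).le (Finset.prod_nonneg fun l _ => ?_)) (SS_pos ε σ).le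
    split
    · exact hl0 l
    · linarith [hl1 l]
  · intro i
    have step1 : ∀ σ : Fin n → Bool,
        (v (Fin.last n) * (∏ l, if σ l then lam l else 1 - lam l) * SS ε σ) * scaleS ε σ i
        = v (Fin.last n) * ((∏ l, if σ l then lam l else 1 - lam l) * uS ε σ i) := by
      intro σ
      unfold scaleS
      field_simp [(SS_pos ε σ).ne']
    rw [Finset.sum_congr rfl (fun σ _ => step1 σ), ← Finset.mul_sum]
    have step2 : ∀ σ : Fin n → Bool,
        (∏ l, if σ l then lam l else 1 - lam l) * uS ε σ i
        = ∏ l, ((if σ l then lam l else 1 - lam l) *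
            (if (i:ℕ) ≤ (l:ℕ) then fB ε (σ l) else 1)) := by
      intro σ
      unfold uS
      rw [← Finset.prod_mul_distrib]
    rw [Finset.sum_congr rfl (fun σ _ => step2 σ)]
    have step3 : (∑ σ : Fin n → Bool, ∏ l, ((if σ l then lam l else 1 - lam l) *
            (if (i:ℕ) ≤ (l:ℕ) then fB ε (σ l) else 1)))
        = ∏ l : Fin n, ∑ b : Bool, ((if b then lam l else 1 - lam l) *
            (if (i:ℕ) ≤ (l:ℕ) then fB ε b else 1)) := by
      rw [Finset.prod_univ_sum]
      rw [← Fintype.piFinset_univ]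
    rw [step3]
    have step4 : ∀ l : Fin n, (∑ b : Bool, ((if b then lam l else 1 - lam l) *
            (if (i:ℕ) ≤ (l:ℕ) then fB ε b else 1)))
        = if (i:ℕ) ≤ (l:ℕ) then v l.castSucc / v l.succ else 1 := by
      intro l
      rw [Fintype.sum_bool]
      by_cases hil : (i:ℕ) ≤ (l:ℕ)
      · simp only [if_pos hil, if_pos, if_neg]
        show lam l * fB ε true + (1 - lam l) * fB ε false = _
        unfold fB
        simp only [if_pos, if_neg Bool.false_ne_true]
        rw [← hE, ← hE']
        exact hkey l
      · simp only [if_neg hil]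
        show lam l * 1 + (1 - lam l) * 1 = (1:ℝ)
        ring
    rw [Finset.prod_congr rfl (fun l _ => step4 l)]
    exact telescope v hv i

/-- With Ψ the matrix whose columns enumerate the 2 ^ n ε-scales, the map B ↦ ΨB is a
surjection from the unfixed representation polytope R_U onto U. -/
theorem stmt7 (ε : ℝ) (hε : 0 < ε) (n : ℕ)
    (Ψ : Matrix (Fin (n+1)) (Fin (2 ^ n)) ℝ)
    (hcols : ∀ c, IsScale ε n (fun i => Ψ i c))
    (hinj : Function.Injective (fun c => fun i => Ψ i c))
    (hsurj : ∀ s, IsScale ε n s → ∃ c, (fun i => Ψ i c) = s) :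
    (fun B : Matrix (Fin (2 ^ n)) (Fin (n+1)) ℝ => Ψ * B) ''
        {B | (∀ i j, 0 ≤ B i j) ∧ (Ψ * B).mulVec (fun _ => (1:ℝ)) = fun _ => 1}
      = {T | (∀ i j, 0 ≤ T i j) ∧ (∀ i, ∑ j, T i j = 1) ∧
          ∀ j, NeighborIndist ε n (fun i => T i j)} := by
  ext T
  constructor
  · rintro ⟨B, ⟨hBnn, hB1⟩, rfl⟩
    refine ⟨?_, ?_, ?_⟩
    · intro i j
      show 0 ≤ (Ψ * B) i j
      rw [Matrix.mul_apply]
      exact Finset.sum_nonneg fun c _ => mul_nonneg ((hcols c).1 i) (hBnn c j)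
    · intro i
      have := congrFun hB1 i
      simpa [Matrix.mulVec, dotProduct] using this
    · intro j i
      have hle : Real.exp (-ε) ≤ Real.exp ε := Real.exp_le_exp.2 (by linarith)
      constructor
      · show Real.exp (-ε) * (Ψ * B) i.succ j ≤ (Ψ * B) i.castSucc j
        simp only [Matrix.mul_apply, Finset.mul_sum]
        apply Finset.sum_le_sum
        intro c _
        have hnn := (hcols c).1 i.succ
        simp only at hnn
        rcases (hcols c).2.2 i with hcc | hcc <;> simp only at hcc
        · calc Real.exp (-ε) * (Ψ i.succ c * B c j)
              = (Real.exp (-ε) * Ψ i.succ c) * B c j := by ring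
            _ ≤ (Real.exp ε * Ψ i.succ c) * B c j :=
                mul_le_mul_of_nonneg_right
                  (mul_le_mul_of_nonneg_right hle hnn) (hBnn c j)
            _ = Ψ i.castSucc c * B c j := by rw [hcc]
        · rw [hcc, mul_assoc]
      · show (Ψ * B) i.castSucc j ≤ Real.exp ε * (Ψ * B) i.succ j
        simp only [Matrix.mul_apply, Finset.mul_sum]
        apply Finset.sum_le_sum
        intro c _
        have hnn := (hcols c).1 i.succ
        simp only at hnn
        rcases (hcols c).2.2 i with hcc | hcc <;> simp only at hcc
        · rw [hcc, mul_assoc]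
        · calc Ψ i.castSucc c * B c j
              = (Real.exp (-ε) * Ψ i.succ c) * B c j := by rw [hcc]
            _ ≤ (Real.exp ε * Ψ i.succ c) * B c j :=
                mul_le_mul_of_nonneg_right
                  (mul_le_mul_of_nonneg_right hle hnn) (hBnn c j)
            _ = Real.exp ε * (Ψ i.succ c * B c j) := by ring
  · rintro ⟨hTnn, hTrow, hTni⟩
    choose w hw0 hw using fun j =>
      decompose ε hε n (fun i => T i j) (fun i => hTnn i j) (hTni j)
    set c' : (Fin n → Bool) → Fin (2 ^ n) :=
      fun σ => (hsurj _ (scaleS_isScale ε σ)).choose with hc'def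
    have hc' : ∀ σ i, Ψ i (c' σ) = scaleS ε σ i := fun σ i =>
      congrFun (hsurj _ (scaleS_isScale ε σ)).choose_spec i
    have hc'inj : Function.Injective c' := by
      intro σ σ' hcc
      apply scaleS_inj ε hε
      funext i
      rw [← hc' σ i, ← hc' σ' i, hcc]
    have hbij : Function.Bijective c' :=
      (Fintype.bijective_iff_injective_and_card c').2
        ⟨hc'inj, by simp [Fintype.card_fun]⟩
    set e := Equiv.ofBijective c' hbij with hedef
    have hPB : Ψ * (Matrix.of fun c j => w j (e.symm c)) = T := by
      ext i j
      rw [Matrix.mul_apply]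
      rw [← Equiv.sum_comp e (fun c => Ψ i c * (Matrix.of fun c j => w j (e.symm c)) c j)]
      have hterm : ∀ σ : Fin n → Bool,
          Ψ i (e σ) * (Matrix.of fun c j => w j (e.symm c)) (e σ) j
          = w j σ * scaleS ε σ i := by
        intro σ
        rw [Matrix.of_apply, Equiv.symm_apply_apply]
        have he : e σ = c' σ := rfl
        rw [he, hc' σ i, mul_comm]
      rw [Finset.sum_congr rfl (fun σ _ => hterm σ)]
      exact hw j i
    refine ⟨Matrix.of fun c j => w j (e.symm c), ⟨fun c j => hw0 j _, ?_⟩, hPB⟩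
    rw [hPB]
    funext i
    simp [Matrix.mulVec, dotProduct, hTrow i]
end

section
/- Let z ∈ ℝ^n be a probability row vector with set of positive indices 𝒫, and let B be an extreme point of the fixed-point representation polytope R_F = {B ∈ ℝ^{k×n} : B ≥ 0, ΨB𝟙_n = 𝟙_n, zΨB = z}, where Ψ is the n × k matrix of ε-scales with k = 2^{n-1}. Then the number of strictly positive entries of B is at least |𝒫| and at most |𝒫| + n − 1. -/
lemma scale_pos {ε : ℝ} {n : ℕ} {s : Fin (n+1) → ℝ} (hs : IsScale ε n s) :
    ∀ i, 0 < s i := by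
  obtain ⟨hnn, hsum, hrel⟩ := hs
  have key : ∀ i : Fin (n+1), (0 < s i ↔ 0 < s 0) := by
    intro i
    induction i using Fin.induction with
    | zero => exact Iff.rfl
    | succ i ih =>
      have step : 0 < s i.succ ↔ 0 < s i.castSucc := by
        obtain ⟨c, hc, h⟩ : ∃ c : ℝ, 0 < c ∧ s i.castSucc = c * s i.succ := by
          rcases hrel i with h | h
          · exact ⟨Real.exp ε, Real.exp_pos _, h⟩
          · exact ⟨Real.exp (-ε), Real.exp_pos _, h⟩
        constructor
        · intro hp; rw [h]; exact mul_pos hc hp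
        · intro hp; rw [h] at hp; nlinarith [hnn i.succ]
      exact step.trans ih
  obtain ⟨j, hj⟩ : ∃ j, 0 < s j := by
    by_contra hc
    push_neg at hc
    have hz : ∀ j, s j = 0 := fun j => le_antisymm (hc j) (hnn j)
    simp [hz] at hsum
  intro i
  exact (key i).mpr ((key j).mp hj)

lemma exists_pos_of_sum_one {m : ℕ} {z : Fin m → ℝ} (hz0 : ∀ i, 0 ≤ z i)
    (hz1 : ∑ i, z i = 1) : ∃ i, 0 < z i := by
  by_contra hc
  push_neg at hc
  have hz : ∀ j, z j = 0 := fun j => le_antisymm (hc j) (hz0 j)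
  simp [hz] at hz1

/-- Every extreme point of the fixed-point representation polytope R_F has a number of
strictly positive entries between |𝒫| and |𝒫| + n − 1, where 𝒫 is the set of indices
where z is positive (here dimension is n+1, so the upper bound is |𝒫| + n). -/
theorem stmt14 (ε : ℝ) (hε : 0 < ε) (n : ℕ)
    (z : Fin (n+1) → ℝ) (hz0 : ∀ i, 0 ≤ z i) (hz1 : ∑ i, z i = 1)
    (Ψ : Matrix (Fin (n+1)) (Fin (2 ^ n)) ℝ)
    (hcols : ∀ c, IsScale ε n (fun i => Ψ i c))
    (hinj : Function.Injective (fun c => fun i => Ψ i c))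
    (hsurj : ∀ s, IsScale ε n s → ∃ c, (fun i => Ψ i c) = s)
    (RF : Set (Matrix (Fin (2 ^ n)) (Fin (n+1)) ℝ))
    (hRF : RF = {B | (∀ i j, 0 ≤ B i j) ∧
      (Ψ * B).mulVec (fun _ => (1:ℝ)) = (fun _ => 1) ∧
      Matrix.vecMul z (Ψ * B) = z})
    (B : Matrix (Fin (2 ^ n)) (Fin (n+1)) ℝ) (hB : B ∈ RF.extremePoints ℝ) :
    (Finset.univ.filter fun i => 0 < z i).card ≤
        (Finset.univ.filter fun p : Fin (2 ^ n) × Fin (n+1) => 0 < B p.1 p.2).card ∧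
    (Finset.univ.filter fun p : Fin (2 ^ n) × Fin (n+1) => 0 < B p.1 p.2).card ≤
        (Finset.univ.filter fun i => 0 < z i).card + n := by
  rw [mem_extremePoints] at hB
  obtain ⟨hBmem, hext⟩ := hB
  rw [hRF] at hBmem
  obtain ⟨hBnn, hB1, hBz⟩ := hBmem
  have hΨpos : ∀ i c, 0 < Ψ i c := fun i c => scale_pos (hcols c) i
  set P : Finset (Fin (n+1)) := Finset.univ.filter fun i => 0 < z i with hP
  set S : Finset (Fin (2^n) × Fin (n+1)) :=
    Finset.univ.filter fun p => 0 < B p.1 p.2 with hS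
  have hmemS : ∀ p : Fin (2^n) × Fin (n+1), p ∈ S ↔ 0 < B p.1 p.2 := by
    intro p; simp [hS]
  set w : Fin (2^n) → ℝ := fun c => ∑ i, z i * Ψ i c with hw
  have hwpos : ∀ c, 0 < w c := by
    intro c
    obtain ⟨i₀, hi₀⟩ := exists_pos_of_sum_one hz0 hz1
    exact Finset.sum_pos' (fun i _ => mul_nonneg (hz0 i) (hΨpos i c).le)
      ⟨i₀, Finset.mem_univ _, mul_pos hi₀ (hΨpos i₀ c)⟩
  have hcol : ∀ j, ∑ c, w c * B c j = z j := by
    intro j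
    rw [← Matrix.vecMul_vecMul] at hBz
    have h := congrFun hBz j
    simpa [Matrix.vecMul, dotProduct, hw] using h
  -- zero columns where z vanishes
  have hzero : ∀ j, z j = 0 → ∀ c, B c j = 0 := by
    intro j hj c
    have h0 : ∑ c, w c * B c j = 0 := by rw [hcol j, hj]
    have := (Finset.sum_eq_zero_iff_of_nonneg
      (fun c _ => mul_nonneg (hwpos c).le (hBnn c j))).mp h0 c (Finset.mem_univ c)
    have hwc := (hwpos c).ne'
    rcases mul_eq_zero.mp this with h | h
    · exact absurd h hwc
    · exact h
  constructor
  · -- lower bound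
    have hchoose : ∀ j ∈ P, ∃ c, 0 < B c j := by
      intro j hj
      have hjpos : 0 < z j := by simpa [hP] using hj
      by_contra hc
      push_neg at hc
      have hz : ∀ c, B c j = 0 := fun c => le_antisymm (hc c) (hBnn c j)
      rw [← hcol j] at hjpos
      simp [hz] at hjpos
    classical
    choose f hf using hchoose
    apply Finset.card_le_card_of_injOn (fun j => if h : j ∈ P then (f j h, j) else (0, j))
    · intro j hj
      simp only [Finset.mem_coe] at hj ⊢
      rw [dif_pos hj, hmemS]
      exact hf j hj
    · intro a _ b _ hab
      by_cases ha : a ∈ P <;> by_cases hb : b ∈ P <;>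
        simp [ha, hb] at hab <;> tauto
  · -- upper bound
    by_contra hcon
    push_neg at hcon
    have hScard : P.card + n + 1 ≤ S.card := hcon
    obtain ⟨j₀, hj₀pos⟩ := exists_pos_of_sum_one hz0 hz1
    have hj₀P : j₀ ∈ P := by simp [hP, hj₀pos]
    set P' : Finset (Fin (n+1)) := P.erase j₀ with hP'
    have hP'card : P'.card = P.card - 1 := Finset.card_erase_of_mem hj₀P
    have hPpos : 1 ≤ P.card := Finset.card_pos.mpr ⟨j₀, hj₀P⟩
    -- the constraint vectors
    set v : {p : Fin (2^n) × Fin (n+1) // p ∈ S} → (Fin (n+1) ⊕ {j // j ∈ P'}) → ℝ :=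
      fun p => Sum.elim (fun i => Ψ i p.1.1)
        (fun j => if p.1.2 = j.1 then w p.1.1 else 0) with hv
    have hnli : ¬ LinearIndependent ℝ v := by
      intro hli
      have hle := hli.fintype_card_le_finrank
      rw [Module.finrank_fintype_fun_eq_card] at hle
      simp only [Fintype.card_sum, Fintype.card_coe, Fintype.card_fin] at hle
      omega
    rw [Fintype.not_linearIndependent_iff] at hnli
    obtain ⟨g, hg, p₀, hp₀⟩ := hnli
    classical
    set D : Matrix (Fin (2^n)) (Fin (n+1)) ℝ :=
      fun c j => if h : (c, j) ∈ S then g ⟨(c, j), h⟩ else 0 with hD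
    have hDg : ∀ p : {p // p ∈ S}, D p.1.1 p.1.2 = g p := by
      rintro ⟨⟨c, j⟩, hp⟩; simp [hD, hp]
    have hDnot : ∀ c j, (c, j) ∉ S → D c j = 0 := by
      intro c j h; simp [hD, h]
    -- translation of sums over support
    have hsumDF : ∀ F : Fin (2^n) → Fin (n+1) → ℝ,
        ∑ c, ∑ j, D c j * F c j = ∑ p : {p // p ∈ S}, g p * F p.1.1 p.1.2 := by
      intro F
      rw [← Finset.sum_product']
      have hsub : S ⊆ Finset.univ ×ˢ Finset.univ := by
        rw [Finset.univ_product_univ]; exact S.subset_univ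
      rw [← Finset.sum_subset hsub (fun x _ hx => by
        rw [hDnot x.1 x.2 (by simpa using hx), zero_mul])]
      rw [← Finset.sum_attach S (fun p => D p.1 p.2 * F p.1 p.2)]
      exact Finset.sum_congr rfl fun p _ => by rw [hDg p]
    -- component equations from hg
    have hgrow : ∀ i, ∑ p : {p // p ∈ S}, g p * Ψ i p.1.1 = 0 := by
      intro i
      have h := congrFun hg (Sum.inl i)
      simpa [hv, Finset.sum_apply, Pi.smul_apply, smul_eq_mul] using h
    have hgcol : ∀ j : {j // j ∈ P'},
        ∑ p : {p // p ∈ S}, g p * (if p.1.2 = j.1 then w p.1.1 else 0) = 0 := by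
      intro j
      have h := congrFun hg (Sum.inr j)
      simpa [hv, Finset.sum_apply, Pi.smul_apply, smul_eq_mul] using h
    have hDrow : ∀ i, ∑ j, ∑ c, Ψ i c * D c j = 0 := by
      intro i
      rw [Finset.sum_comm]
      calc ∑ c, ∑ j, Ψ i c * D c j
          = ∑ c, ∑ j, D c j * (fun c (_ : Fin (n+1)) => Ψ i c) c j :=
            Finset.sum_congr rfl fun c _ => Finset.sum_congr rfl fun j _ => mul_comm _ _
        _ = ∑ p : {p // p ∈ S}, g p * Ψ i p.1.1 := hsumDF _
        _ = 0 := hgrow i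
    have hcolD' : ∀ j, ∑ c, w c * D c j =
        ∑ p : {p // p ∈ S}, g p * (if p.1.2 = j then w p.1.1 else 0) := by
      intro j
      rw [← hsumDF (fun c j' => if j' = j then w c else 0)]
      refine Finset.sum_congr rfl fun c _ => ?_
      rw [Finset.sum_eq_single j]
      · rw [if_pos rfl]; ring
      · intro b _ hb; rw [if_neg hb, mul_zero]
      · intro h; exact absurd (Finset.mem_univ j) h
    have hcolDP' : ∀ j ∈ P', ∑ c, w c * D c j = 0 := by
      intro j hj
      rw [hcolD' j]
      exact hgcol ⟨j, hj⟩
    have hznot : ∀ j, j ∉ P → z j = 0 := by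
      intro j hj
      by_contra hzb
      exact hj (by simp [hP, lt_of_le_of_ne (hz0 j) (Ne.symm hzb)])
    have hcolD0 : ∀ j, z j = 0 → ∑ c, w c * D c j = 0 := by
      intro j hj
      have hDj : ∀ c, D c j = 0 := fun c => hDnot c j (by
        rw [hmemS]; simp [hzero j hj c])
      simp [hDj]
    have htot : ∑ j, ∑ c, w c * D c j = 0 := by
      rw [Finset.sum_comm]
      calc ∑ c, ∑ j, w c * D c j
          = ∑ c, ∑ i, z i * Ψ i c * ∑ j, D c j := by
            refine Finset.sum_congr rfl fun c _ => ?_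
            rw [← Finset.mul_sum]
            show (∑ i, z i * Ψ i c) * _ = _
            rw [Finset.sum_mul]
        _ = ∑ i, z i * ∑ c, Ψ i c * ∑ j, D c j := by
            rw [Finset.sum_comm]
            refine Finset.sum_congr rfl fun i _ => ?_
            rw [Finset.mul_sum]
            simp_rw [mul_assoc]
        _ = 0 := by
            refine Finset.sum_eq_zero fun i _ => ?_
            have h0 : ∑ c, Ψ i c * ∑ j, D c j = 0 := by
              simp_rw [Finset.mul_sum]
              rw [Finset.sum_comm]
              exact hDrow i
            rw [h0, mul_zero]
    have hcolD : ∀ j, ∑ c, w c * D c j = 0 := by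
      have hne : ∀ b, b ≠ j₀ → ∑ c, w c * D c b = 0 := by
        intro b hb
        by_cases hbP : b ∈ P
        · exact hcolDP' b (Finset.mem_erase.mpr ⟨hb, hbP⟩)
        · exact hcolD0 b (hznot b hbP)
      intro j
      by_cases hj : j = j₀
      · subst hj
        have h := htot
        rw [Finset.sum_eq_single j] at h
        · exact h
        · intro b _ hb; exact hne b hb
        · intro h'; exact absurd (Finset.mem_univ j) h'
      · exact hne j hj
    have hDrowM : (Ψ * D).mulVec (fun _ => (1:ℝ)) = 0 := by
      funext i
      simp only [Matrix.mulVec, dotProduct, Matrix.mul_apply, mul_one, Pi.zero_apply]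
      exact hDrow i
    have hDcolM : Matrix.vecMul z (Ψ * D) = 0 := by
      funext j
      rw [← Matrix.vecMul_vecMul]
      simp only [Matrix.vecMul, dotProduct, Pi.zero_apply]
      exact hcolD j
    -- perturbation size
    have hSne : S.Nonempty := ⟨p₀.1, p₀.2⟩
    set m : ℝ := S.inf' hSne (fun p => B p.1 p.2) with hm
    have hmpos : 0 < m := by
      rw [Finset.lt_inf'_iff]
      intro p hp
      exact (hmemS p).mp hp
    have hmle : ∀ p ∈ S, m ≤ B p.1 p.2 := fun p hp => Finset.inf'_le _ hp
    set M : ℝ := S.sup' hSne (fun p => |D p.1 p.2|) with hM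
    have hMle : ∀ p ∈ S, |D p.1 p.2| ≤ M := fun p hp => Finset.le_sup' (fun p => |D p.1 p.2|) hp
    have hMpos : 0 < M := by
      have h1 : |D p₀.1.1 p₀.1.2| ≤ M := hMle p₀.1 p₀.2
      rw [hDg p₀] at h1
      exact lt_of_lt_of_le (abs_pos.mpr hp₀) h1
    set t : ℝ := m / M with ht
    have htpos : 0 < t := div_pos hmpos hMpos
    have hbound : ∀ c j, t * |D c j| ≤ m := by
      intro c j
      by_cases h : (c, j) ∈ S
      · have h1 := hMle (c, j) h
        calc t * |D c j| ≤ t * M := by nlinarith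
          _ = m := by rw [ht]; field_simp
      · rw [hDnot c j h]
        simp [hmpos.le]
    have hXmem : ∀ a : ℝ, |a| ≤ t → B + a • D ∈ RF := by
      intro a ha
      rw [hRF]
      refine ⟨?_, ?_, ?_⟩
      · intro c j
        simp only [Matrix.add_apply, Matrix.smul_apply, smul_eq_mul]
        by_cases h : (c, j) ∈ S
        · have h1 := hmle (c, j) h
          have h2 : |a * D c j| ≤ m := by
            rw [abs_mul]
            calc |a| * |D c j| ≤ t * |D c j| :=
                  mul_le_mul_of_nonneg_right ha (abs_nonneg _)
              _ ≤ m := hbound c j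
          have h3 := (abs_le.mp h2).1
          simp only at h1 ⊢
          linarith
        · rw [hDnot c j h]
          simpa using hBnn c j
      · rw [Matrix.mul_add, Matrix.mul_smul, Matrix.add_mulVec, Matrix.smul_mulVec,
          hB1, hDrowM]
        funext i
        simp
      · have hz2 : Matrix.vecMul z (a • (Ψ * D)) = 0 := by
          funext j
          have h0 := congrFun hDcolM j
          simp only [Matrix.vecMul, dotProduct, Pi.zero_apply] at h0 ⊢
          simp only [Matrix.smul_apply, smul_eq_mul]
          rw [show (∑ i, z i * (a * (Ψ * D) i j)) = a * ∑ i, z i * (Ψ * D) i j by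
            rw [Finset.mul_sum]; exact Finset.sum_congr rfl fun i _ => by ring]
          rw [h0, mul_zero]
        rw [Matrix.mul_add, Matrix.mul_smul, Matrix.vecMul_add, hz2, hBz]
        simp
    have hX : B + t • D ∈ RF := hXmem t (by rw [abs_of_pos htpos])
    have hY : B + (-t) • D ∈ RF := hXmem (-t) (by rw [abs_neg, abs_of_pos htpos])
    have hseg : B ∈ openSegment ℝ (B + t • D) (B + (-t) • D) := by
      refine ⟨1/2, 1/2, by norm_num, by norm_num, by norm_num, ?_⟩
      funext c j
      simp only [Matrix.add_apply, Matrix.smul_apply, Pi.add_apply, Pi.smul_apply,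
        smul_eq_mul]
      ring
    have hXB := (hext _ hX _ hY hseg).1
    have hD0 : t • D = 0 := by
      have := hXB
      rwa [add_eq_left] at this
    have hfin : t * D p₀.1.1 p₀.1.2 = 0 := congrFun (congrFun hD0 p₀.1.1) p₀.1.2
    rw [hDg p₀] at hfin
    rcases mul_eq_zero.mp hfin with h | h
    · exact htpos.ne' h
    · exact hp₀ h
end

section
/- The n single-peaked ε-scales are linearly independent. That is, letting σ^{(l)} for l ∈ {0,...,n-1} be the ε-scale satisfying σ^{(l)}_i = e^ε σ^{(l)}_{i+1} for i ≥ l and σ^{(l)}_i = e^{-ε} σ^{(l)}_{i+1} for i < l (increasing up to a peak at position l, then decreasing), the vectors σ^{(0)},...,σ^{(n-1)} form a basis of ℝ^n. -/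
noncomputable def phi (ε : ℝ) (n : ℕ) (l : Fin (n+1)) : (Fin (n+1) → ℝ) →ₗ[ℝ] ℝ :=
  (∑ i : Fin n,
    ((if i.succ = l then
        (Real.exp (-ε) • LinearMap.proj i.succ - LinearMap.proj i.castSucc :
          (Fin (n+1) → ℝ) →ₗ[ℝ] ℝ) else 0)
     + (if i.castSucc = l then
        (Real.exp ε • LinearMap.proj i.castSucc - LinearMap.proj i.succ :
          (Fin (n+1) → ℝ) →ₗ[ℝ] ℝ) else 0)))
  + (if (l:ℕ) = n then (Real.exp ε - Real.exp (-ε)) • LinearMap.proj l else 0)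

lemma phi_apply (ε : ℝ) (n : ℕ) (l : Fin (n+1)) (v : Fin (n+1) → ℝ) :
    phi ε n l v =
      (∑ i : Fin n,
        ((if i.succ = l then Real.exp (-ε) * v i.succ - v i.castSucc else 0)
         + (if i.castSucc = l then Real.exp ε * v i.castSucc - v i.succ else 0)))
      + (if (l:ℕ) = n then (Real.exp ε - Real.exp (-ε)) * v l else 0) := by
  simp [phi, apply_ite (fun f : (Fin (n+1) → ℝ) →ₗ[ℝ] ℝ => f v)]

lemma sum_ite_succ (n : ℕ) (l : Fin (n+1)) (f : Fin n → ℝ) (i : Fin n) (hi : i.succ = l) :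
    ∑ j : Fin n, (if j.succ = l then f j else 0) = f i := by
  subst hi
  rw [Finset.sum_eq_single_of_mem i (Finset.mem_univ i)]
  · rw [if_pos rfl]
  · intro j _ hj; exact if_neg (fun h => hj (Fin.succ_injective _ h))

lemma sum_ite_succ_zero (n : ℕ) (l : Fin (n+1)) (f : Fin n → ℝ)
    (hl : ∀ i : Fin n, i.succ ≠ l) :
    ∑ j : Fin n, (if j.succ = l then f j else 0) = 0 :=
  Finset.sum_eq_zero fun i _ => if_neg (hl i)

lemma sum_ite_cast (n : ℕ) (l : Fin (n+1)) (f : Fin n → ℝ) (i : Fin n) (hi : i.castSucc = l) :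
    ∑ j : Fin n, (if j.castSucc = l then f j else 0) = f i := by
  subst hi
  rw [Finset.sum_eq_single_of_mem i (Finset.mem_univ i)]
  · rw [if_pos rfl]
  · intro j _ hj; exact if_neg (fun h => hj (Fin.castSucc_injective _ h))

lemma sum_ite_cast_zero (n : ℕ) (l : Fin (n+1)) (f : Fin n → ℝ)
    (hl : ∀ i : Fin n, i.castSucc ≠ l) :
    ∑ j : Fin n, (if j.castSucc = l then f j else 0) = 0 :=
  Finset.sum_eq_zero fun i _ => if_neg (hl i)

lemma phi_eval (ε : ℝ) (n : ℕ) (l m : Fin (n+1)) (v : Fin (n+1) → ℝ)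
    (hpk : ∀ i : Fin n,
      ((m:ℕ) ≤ (i:ℕ) → v i.castSucc = Real.exp ε * v i.succ) ∧
      ((i:ℕ) < (m:ℕ) → v i.castSucc = Real.exp (-ε) * v i.succ)) :
    phi ε n l v = if m = l then (Real.exp ε - Real.exp (-ε)) * v l else 0 := by
  have hprod : Real.exp ε * Real.exp (-ε) = 1 := by
    rw [← Real.exp_add]; simp
  rw [phi_apply, Finset.sum_add_distrib]
  obtain ⟨lv, hl⟩ := l
  rcases Nat.eq_zero_or_pos lv with h0 | h0
  · subst h0
    rw [sum_ite_succ_zero n _ _ (fun i h => by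
      have := congrArg Fin.val h; simp at this)]
    rcases Nat.eq_zero_or_pos n with hn | hn
    · subst hn
      rw [sum_ite_cast_zero 0 _ _ (fun i _ => i.elim0), if_pos rfl,
        if_pos (Fin.ext (by omega : (m:ℕ) = 0))]
      ring
    · have hi2 : ((⟨0, hn⟩ : Fin n)).castSucc = (⟨0, hl⟩ : Fin (n+1)) := Fin.ext rfl
      rw [sum_ite_cast n _ _ ⟨0, hn⟩ hi2, if_neg (by simp; omega), hi2]
      rcases Nat.eq_zero_or_pos (m:ℕ) with hm | hm
      · have rB := (hpk ⟨0, hn⟩).1 (by omega)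
        rw [hi2] at rB
        rw [if_pos (Fin.ext (by omega : (m:ℕ) = 0))]
        linear_combination Real.exp (-ε) * rB + v (⟨0, hn⟩ : Fin n).succ * hprod
      · have rB := (hpk ⟨0, hn⟩).2 hm
        rw [hi2] at rB
        rw [if_neg (by intro h; have : (m:ℕ) = 0 := congrArg Fin.val h; omega)]
        linear_combination Real.exp ε * rB + v (⟨0, hn⟩ : Fin n).succ * hprod
  · -- 0 < lv
    have hn : 0 < n := by omega
    have hi1 : ((⟨lv - 1, by omega⟩ : Fin n)).succ = (⟨lv, hl⟩ : Fin (n+1)) :=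
      Fin.ext (by simp; omega)
    rw [sum_ite_succ n _ _ ⟨lv - 1, by omega⟩ hi1, hi1]
    set i1 : Fin n := ⟨lv - 1, by omega⟩ with hi1def
    rcases Nat.lt_or_ge lv n with hlt | hge
    · -- interior: 0 < lv < n
      have hi2 : ((⟨lv, hlt⟩ : Fin n)).castSucc = (⟨lv, hl⟩ : Fin (n+1)) := Fin.ext rfl
      rw [sum_ite_cast n _ _ ⟨lv, hlt⟩ hi2, hi2, if_neg (by simp; omega)]
      set i2 : Fin n := ⟨lv, hlt⟩ with hi2def
      rcases lt_trichotomy (m:ℕ) lv with hm | hm | hm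
      · have rA := (hpk i1).1 (by simp [hi1def]; omega)
        have rB := (hpk i2).1 (by simp [hi2def]; omega)
        rw [hi1] at rA; rw [hi2] at rB
        rw [if_neg (by intro h; have := congrArg Fin.val h; simp at this; omega)]
        linear_combination -rA + Real.exp (-ε) * rB + v i2.succ * hprod
      · have rA := (hpk i1).2 (by simp [hi1def]; omega)
        have rB := (hpk i2).1 (by simp [hi2def]; omega)
        rw [hi1] at rA; rw [hi2] at rB
        rw [if_pos (Fin.ext (by omega : (m:ℕ) = lv))]
        linear_combination -rA + Real.exp (-ε) * rB + v i2.succ * hprod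
      · have rA := (hpk i1).2 (by simp [hi1def]; omega)
        have rB := (hpk i2).2 (by simp [hi2def]; omega)
        rw [hi1] at rA; rw [hi2] at rB
        rw [if_neg (by intro h; have := congrArg Fin.val h; simp at this; omega)]
        linear_combination -rA + Real.exp ε * rB + v i2.succ * hprod
    · -- lv = n
      have hge' : lv = n := by omega
      rw [sum_ite_cast_zero n _ _ (fun i h => by
        have := congrArg Fin.val h; simp at this; omega), if_pos (by simp; omega)]
      rcases Nat.lt_or_ge (m:ℕ) lv with hm | hm
      · have rA := (hpk i1).1 (by simp [hi1def]; omega)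
        rw [hi1] at rA
        rw [if_neg (by intro h; have := congrArg Fin.val h; simp at this; omega)]
        linear_combination -rA
      · have rA := (hpk i1).2 (by simp [hi1def]; omega)
        rw [hi1] at rA
        rw [if_pos (Fin.ext (by omega : (m:ℕ) = lv))]
        linear_combination -rA

lemma scale_ne_zero (ε : ℝ) (n : ℕ) (s : Fin (n+1) → ℝ) (hs : IsScale ε n s)
    (l : Fin (n+1)) : s l ≠ 0 := by
  intro hzero
  have hiff : ∀ i : Fin n, (s i.castSucc = 0 ↔ s i.succ = 0) := by
    intro i
    rcases hs.2.2 i with h | h <;> rw [h] <;> simp [Real.exp_ne_zero]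
  have h0 : ∀ j : Fin (n+1), (s j = 0 ↔ s 0 = 0) := by
    intro j
    induction j using Fin.induction with
    | zero => exact Iff.rfl
    | succ i ih => rw [← hiff i]; exact ih
  have hsum : ∑ j, s j = 0 :=
    Finset.sum_eq_zero fun j _ => (h0 j).mpr ((h0 l).mp hzero)
  exact one_ne_zero (hs.2.1.symm.trans hsum)

/-- The n+1 single-peaked ε-scales (the scale σ^{(l)} satisfies
σ_i = e^{-ε} σ_{i+1} for i < l and σ_i = e^ε σ_{i+1} for i ≥ l) form a basis of
ℝ^{n+1}: they are linearly independent and span. -/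
theorem stmt18 (ε : ℝ) (hε : 0 < ε) (n : ℕ)
    (σ : Fin (n+1) → Fin (n+1) → ℝ)
    (hscale : ∀ l, IsScale ε n (σ l))
    (hpeak : ∀ (l : Fin (n+1)) (i : Fin n),
      ((l:ℕ) ≤ (i:ℕ) → σ l i.castSucc = Real.exp ε * σ l i.succ) ∧
      ((i:ℕ) < (l:ℕ) → σ l i.castSucc = Real.exp (-ε) * σ l i.succ)) :
    LinearIndependent ℝ σ ∧ Submodule.span ℝ (Set.range σ) = ⊤ := by
  have key : ∀ l m : Fin (n+1),
      phi ε n l (σ m) = if m = l then (Real.exp ε - Real.exp (-ε)) * σ l l else 0 := by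
    intro l m
    have := phi_eval ε n l m (σ m) (hpeak m)
    rw [this]
    by_cases h : m = l
    · subst h; simp
    · simp [h]
  have hli : LinearIndependent ℝ σ := by
    rw [Fintype.linearIndependent_iff]
    intro g hg l
    have h1 : phi ε n l (∑ i, g i • σ i) = 0 := by rw [hg]; simp
    rw [map_sum] at h1
    simp only [map_smul, key, smul_eq_mul, mul_ite, mul_zero] at h1
    rw [Finset.sum_ite_eq' Finset.univ l] at h1
    simp only [Finset.mem_univ, if_true] at h1
    have hne : (Real.exp ε - Real.exp (-ε)) * σ l l ≠ 0 :=
      mul_ne_zero (sub_ne_zero.mpr (Real.exp_lt_exp.mpr (by linarith : -ε < ε)).ne')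
        (scale_ne_zero ε n (σ l) (hscale l) l)
    exact (mul_eq_zero.mp h1).resolve_right hne
  refine ⟨hli, hli.span_eq_top_of_card_eq_finrank ?_⟩
  simp [Module.finrank_fintype_fun_eq_card]
end
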